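/- arXiv:1407.3099 — 5 statements merged into one kernel-verified Lean document; each statement's English description precedes it below -/
import Mathlib

section
/- For k = 1, the function z ↦ A(1/2; z) is differentiable at z = 0 and its derivative satisfies A'(1/2; 0) = A(1/2; 0) · (2 log q) · Σ_{P monic irreducible} deg(P) / ( |P|(|P|+1) − 1 ), where A(1/2;0) = ∏_{P monic irreducible} (1 − 1/((|P|+1)|P|)) and the series over P converges absolutely. -/
/-- The norm `|P| = q^{deg P}` of a polynomial over `F_q`, as a real number. -/
noncomputable def pnorm {Fq : Type*} [Field Fq] [Fintype Fq] (P : Polynomial Fq) : ℝ :=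
  (Fintype.card Fq : ℝ) ^ P.natDegree

/-- The Euler product `A(1/2; z)` (case `k = 1`), a function of `z ∈ ℂ`:
`∏_P (1 − |P|^{-(1+2z)})·[(1/2)((1−|P|^{-(1/2+z)})⁻¹+(1+|P|^{-(1/2+z)})⁻¹)+1/|P|]·(1+1/|P|)⁻¹`,
with `|P|^w = exp(w·(deg P)·log q)`. -/
noncomputable def eulerA1 (Fq : Type*) [Field Fq] [Fintype Fq] (z : ℂ) : ℂ :=
  ∏' P : {P : Polynomial Fq // P.Monic ∧ Irreducible P},
    (1 - Complex.exp (-(1 + 2 * z) * ((P.1.natDegree : ℂ) * Real.log (Fintype.card Fq)))) *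
      ((1 / 2) *
        ((1 - Complex.exp (-(1 / 2 + z) *
            ((P.1.natDegree : ℂ) * Real.log (Fintype.card Fq))))⁻¹ +
         (1 + Complex.exp (-(1 / 2 + z) *
            ((P.1.natDegree : ℂ) * Real.log (Fintype.card Fq))))⁻¹) +
        ((pnorm P.1 : ℝ) : ℂ)⁻¹) *
      (1 + ((pnorm P.1 : ℝ) : ℂ)⁻¹)⁻¹

open Complex Polynomial

namespace Stmt8Aux

variable {Fq : Type*} [Field Fq] [Fintype Fq]

/-- abbreviation for monic irreducibles -/
abbrev MIrr (Fq : Type*) [Field Fq] [Fintype Fq] := {P : Polynomial Fq // P.Monic ∧ Irreducible P}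

noncomputable def EE (P : MIrr Fq) (z : ℂ) : ℂ :=
  Complex.exp (-(1 + 2 * z) * ((P.1.natDegree : ℂ) * Real.log (Fintype.card Fq)))

noncomputable def FF (P : MIrr Fq) (z : ℂ) : ℂ :=
  1 - EE P z / ((pnorm P.1 + 1 : ℝ) : ℂ)

noncomputable def FF' (P : MIrr Fq) (z : ℂ) : ℂ :=
  ((2 * (P.1.natDegree * Real.log (Fintype.card Fq)) : ℝ) : ℂ) * EE P z /
    ((pnorm P.1 + 1 : ℝ) : ℂ)

noncomputable def gg (P : MIrr Fq) (z : ℂ) : ℂ := Complex.log (FF P z)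

noncomputable def gg' (P : MIrr Fq) (z : ℂ) : ℂ := FF' P z / FF P z

def tset : Set ℂ := {z | -(1/4 : ℝ) < z.re}

noncomputable def rr (P : MIrr Fq) : ℝ := 1 - ((pnorm P.1 + 1) * pnorm P.1)⁻¹

noncomputable def uu (P : MIrr Fq) : ℝ :=
  3 * Real.log (Fintype.card Fq) *
    (P.1.natDegree * Real.exp (-(P.1.natDegree * Real.log (Fintype.card Fq)) / 2) /
      (Fintype.card Fq : ℝ) ^ P.1.natDegree)

lemma abs_log_one_sub_le {x : ℝ} (h0 : 0 ≤ x) (h2 : x ≤ 1/2) :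
    |Real.log (1 - x)| ≤ 2 * x := by
  have hx1 : 0 < 1 - x := by linarith
  have hle : Real.log (1 - x) ≤ 0 := Real.log_nonpos (by linarith) (by linarith)
  rw [abs_of_nonpos hle]
  have h := Real.log_le_sub_one_of_pos (inv_pos.2 hx1)
  rw [Real.log_inv] at h
  have h3 : (1 - x)⁻¹ ≤ 1 + 2 * x := by
    rw [inv_le_iff_one_le_mul₀ hx1]
    nlinarith
  linarith

lemma summable_deg {Fq : Type*} [Field Fq] [Fintype Fq] {c : ℕ → ℝ}
    (hc : ∀ n, 0 ≤ c n)
    (hsum : Summable fun n => (Fintype.card Fq : ℝ) ^ n * c n) :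
    Summable (fun P : {P : Polynomial Fq // P.Monic ∧ Irreducible P} => c P.1.natDegree) := by
  classical
  have hnn : ∀ n, 0 ≤ (Fintype.card Fq : ℝ) ^ n * c n := fun n => mul_nonneg (by positivity) (hc n)
  refine summable_of_sum_le (c := ∑' n, (Fintype.card Fq : ℝ) ^ n * c n) (fun P => hc _) (fun s => ?_)
  set T : Finset ℕ := s.image (fun P => P.1.natDegree) with hT
  have hmaps : ∀ P ∈ s, P.1.natDegree ∈ T := fun P hP => Finset.mem_image_of_mem _ hP
  rw [← Finset.sum_fiberwise_of_maps_to hmaps (fun P => c P.1.natDegree)]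
  have key : ∀ n, (∑ P ∈ s.filter (fun P => P.1.natDegree = n), c P.1.natDegree)
      ≤ (Fintype.card Fq : ℝ) ^ n * c n := by
    intro n
    have hcard : (s.filter (fun P => P.1.natDegree = n)).card ≤ Fintype.card Fq ^ n := by
      have : (s.filter (fun P => P.1.natDegree = n)).card
          ≤ (Finset.univ : Finset (Fin n → Fq)).card := by
        apply Finset.card_le_card_of_injOn (fun P (i : Fin n) => P.1.coeff i)
          (fun P _ => Finset.mem_univ _)
        intro P hP Q hQ h
        simp only [Finset.mem_coe, Finset.mem_filter] at hP hQ
        ext1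
        apply Polynomial.ext
        intro i
        rcases lt_trichotomy i n with hi | hi | hi
        · exact congrFun h ⟨i, hi⟩
        · subst hi
          have h1 : P.1.coeff i = 1 := by
            have := P.2.1.coeff_natDegree
            rwa [hP.2] at this
          have h2 : Q.1.coeff i = 1 := by
            have := Q.2.1.coeff_natDegree
            rwa [hQ.2] at this
          rw [h1, h2]
        · rw [Polynomial.coeff_eq_zero_of_natDegree_lt (by rw [hP.2]; exact hi),
            Polynomial.coeff_eq_zero_of_natDegree_lt (by rw [hQ.2]; exact hi)]
      simpa [Fintype.card_fun] using this
    have hsum_eq : (∑ P ∈ s.filter (fun P => P.1.natDegree = n), c P.1.natDegree)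
        = (s.filter (fun P => P.1.natDegree = n)).card * c n := by
      rw [Finset.sum_congr rfl (fun P hP => by rw [(Finset.mem_filter.mp hP).2]),
        Finset.sum_const, nsmul_eq_mul]
    rw [hsum_eq]
    have : ((s.filter (fun P => P.1.natDegree = n)).card : ℝ) ≤ (Fintype.card Fq : ℝ) ^ n := by
      exact_mod_cast hcard
    exact mul_le_mul_of_nonneg_right this (hc n)
  calc (∑ n ∈ T, ∑ P ∈ s.filter (fun P => P.1.natDegree = n), c P.1.natDegree)
      ≤ ∑ n ∈ T, (Fintype.card Fq : ℝ) ^ n * c n := Finset.sum_le_sum (fun n _ => key n)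
    _ ≤ ∑' n, (Fintype.card Fq : ℝ) ^ n * c n := Summable.sum_le_tsum T (fun n _ => hnn n) hsum


section facts

lemma hq1R (hq3 : 3 ≤ Fintype.card Fq) : (1 : ℝ) < Fintype.card Fq := by exact_mod_cast lt_of_lt_of_le (by norm_num) hq3

lemma hL0 (hq3 : 3 ≤ Fintype.card Fq) : 0 < Real.log (Fintype.card Fq) := Real.log_pos (hq1R hq3)

lemma hd1 (P : MIrr Fq) : 1 ≤ P.1.natDegree := P.2.2.natDegree_pos

lemma hN3 (hq3 : 3 ≤ Fintype.card Fq) (P : MIrr Fq) : 3 ≤ pnorm P.1 := by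
  have h1 : (3 : ℝ) ≤ (Fintype.card Fq : ℝ) := by exact_mod_cast hq3
  calc (3:ℝ) ≤ (Fintype.card Fq : ℝ) ^ 1 := by simpa using h1
    _ ≤ (Fintype.card Fq : ℝ) ^ P.1.natDegree :=
        pow_le_pow_right₀ (by linarith) (hd1 P)

lemma hN0 (hq3 : 3 ≤ Fintype.card Fq) (P : MIrr Fq) : 0 < pnorm P.1 := lt_of_lt_of_le (by norm_num) (hN3 hq3 P)

lemma norm_EE (P : MIrr Fq) (z : ℂ) :
    ‖EE P z‖ = Real.exp ((P.1.natDegree * Real.log (Fintype.card Fq)) * (-(1 + 2 * z.re))) := by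
  rw [EE, Complex.norm_exp]
  congr 1
  have : (-(1 + 2 * z) * ((P.1.natDegree : ℂ) * (Real.log (Fintype.card Fq) : ℝ)))
      = (((P.1.natDegree * Real.log (Fintype.card Fq) : ℝ)) : ℂ) * (-(1 + 2 * z)) := by
    push_cast; ring
  rw [this, Complex.re_ofReal_mul]
  simp

lemma EE_le (hq3 : 3 ≤ Fintype.card Fq) (P : MIrr Fq) {z : ℂ} (hz : z ∈ tset) :
    ‖EE P z‖ ≤ Real.exp (-(P.1.natDegree * Real.log (Fintype.card Fq)) / 2) := by
  rw [norm_EE]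
  apply Real.exp_le_exp.mpr
  have hdL : 0 < (P.1.natDegree : ℝ) * Real.log (Fintype.card Fq) := by
    have := hL0 hq3
    have := hd1 P
    have h1 : (1:ℝ) ≤ P.1.natDegree := by exact_mod_cast this
    nlinarith
  have hre : -(1/4 : ℝ) < z.re := hz
  nlinarith

lemma EE_le_one (hq3 : 3 ≤ Fintype.card Fq) (P : MIrr Fq) {z : ℂ} (hz : z ∈ tset) : ‖EE P z‖ ≤ 1 := by
  refine le_trans (EE_le hq3 P hz) (Real.exp_le_one_iff.mpr ?_)
  have := hL0 hq3
  have h1 : (1:ℝ) ≤ P.1.natDegree := by exact_mod_cast hd1 P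
  nlinarith

lemma norm_EE_div (hq3 : 3 ≤ Fintype.card Fq) (P : MIrr Fq) (z : ℂ) :
    ‖EE P z / ((pnorm P.1 + 1 : ℝ) : ℂ)‖ = ‖EE P z‖ / (pnorm P.1 + 1) := by
  rw [norm_div, Complex.norm_real, Real.norm_eq_abs, abs_of_pos (by have := hN0 hq3 P; linarith)]

lemma EE_div_le (hq3 : 3 ≤ Fintype.card Fq) (P : MIrr Fq) {z : ℂ} (hz : z ∈ tset) :
    ‖EE P z / ((pnorm P.1 + 1 : ℝ) : ℂ)‖ ≤ 1/4 := by
  rw [norm_EE_div hq3]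
  have h1 := EE_le_one hq3 P hz
  have h2 := hN3 hq3 P
  have h3 : 0 ≤ ‖EE P z‖ := norm_nonneg _
  rw [div_le_iff₀ (by linarith)]
  nlinarith

lemma FF_re (hq3 : 3 ≤ Fintype.card Fq) (P : MIrr Fq) {z : ℂ} (hz : z ∈ tset) : 3/4 ≤ (FF P z).re := by
  have h := EE_div_le hq3 P hz
  have h2 : (EE P z / ((pnorm P.1 + 1 : ℝ) : ℂ)).re ≤ 1/4 :=
    le_trans (Complex.re_le_norm _) h
  simp only [FF, Complex.sub_re, Complex.one_re]
  linarith

lemma FF_norm (hq3 : 3 ≤ Fintype.card Fq) (P : MIrr Fq) {z : ℂ} (hz : z ∈ tset) : 3/4 ≤ ‖FF P z‖ :=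
  le_trans (FF_re hq3 P hz) (le_trans (Complex.re_le_norm _) le_rfl)

lemma FF_ne (hq3 : 3 ≤ Fintype.card Fq) (P : MIrr Fq) {z : ℂ} (hz : z ∈ tset) : FF P z ≠ 0 := by
  intro h
  have := FF_norm hq3 P hz
  rw [h] at this
  simp at this
  linarith

lemma hasDerivAt_FF (P : MIrr Fq) (z : ℂ) : HasDerivAt (FF P) (FF' P z) z := by
  have h1 : HasDerivAt (fun z : ℂ => -(1 + 2 * z) *
      ((P.1.natDegree : ℂ) * (Real.log (Fintype.card Fq) : ℝ)))
      (-2 * ((P.1.natDegree : ℂ) * (Real.log (Fintype.card Fq) : ℝ))) z := by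
    have := (((hasDerivAt_id z).const_mul (2:ℂ)).const_add 1).neg.mul_const
      ((P.1.natDegree : ℂ) * ((Real.log (Fintype.card Fq) : ℝ) : ℂ))
    simpa using this
  have h2 := h1.cexp
  have h3 := (h2.div_const ((pnorm P.1 + 1 : ℝ) : ℂ)).const_sub 1
  convert h3 using 1
  case e'_4 => rfl
  case e'_5 => rfl
  case e'_8 => rfl
  rw [FF', EE]
  push_cast
  ring

lemma hasDerivAt_gg (hq3 : 3 ≤ Fintype.card Fq) (P : MIrr Fq) {z : ℂ} (hz : z ∈ tset) :
    HasDerivAt (gg P) (gg' P z) z := by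
  have := (hasDerivAt_FF P z).clog ?_
  · exact this
  · exact Or.inl (lt_of_lt_of_le (by norm_num) (FF_re hq3 P hz))

lemma gg'_bound (hq3 : 3 ≤ Fintype.card Fq) (P : MIrr Fq) {z : ℂ} (hz : z ∈ tset) :
    ‖gg' P z‖ ≤ uu P := by
  have hd : (1:ℝ) ≤ (P.1.natDegree : ℝ) := by exact_mod_cast hd1 P
  have hL := hL0 hq3
  have hN := hN3 hq3 P
  have hE := EE_le hq3 P hz
  have hFn := FF_norm hq3 P hz
  have hE0 : (0:ℝ) ≤ ‖EE P z‖ := norm_nonneg _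
  have hX0 : (0:ℝ) < Real.exp (-((P.1.natDegree : ℝ) * Real.log (Fintype.card Fq)) / 2) :=
    Real.exp_pos _
  have hnorm : ‖gg' P z‖ = 2 * ((P.1.natDegree : ℝ) * Real.log (Fintype.card Fq)) * ‖EE P z‖ /
      (pnorm P.1 + 1) / ‖FF P z‖ := by
    rw [gg', norm_div, FF', norm_div, norm_mul, Complex.norm_real, Complex.norm_real,
      Real.norm_eq_abs, Real.norm_eq_abs,
      _root_.abs_of_nonneg (by nlinarith :
        (0:ℝ) ≤ 2 * ((P.1.natDegree : ℝ) * Real.log (Fintype.card Fq))),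
      _root_.abs_of_pos (by nlinarith : (0:ℝ) < pnorm P.1 + 1)]
  rw [hnorm, uu]
  have hqd : (Fintype.card Fq : ℝ) ^ P.1.natDegree = pnorm P.1 := rfl
  rw [hqd]
  set dr : ℝ := (P.1.natDegree : ℝ)
  set L : ℝ := Real.log (Fintype.card Fq)
  set N : ℝ := pnorm P.1
  set X : ℝ := Real.exp (-(dr * L) / 2)
  set Ev : ℝ := ‖EE P z‖
  have step1 : 2 * (dr * L) * Ev / (N + 1) / ‖FF P z‖
      ≤ 2 * (dr * L) * X / (N + 1) / (3/4) := by
    apply div_le_div₀ (by positivity) ?_ (by norm_num) hFn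
    apply div_le_div₀ (by positivity) ?_ (by nlinarith) le_rfl
    exact mul_le_mul_of_nonneg_left hE (by nlinarith)
  refine step1.trans ?_
  have e1 : 2 * (dr * L) * X / (N + 1) / (3/4) = 8/3 * (dr * L * X) / (N + 1) := by ring
  have e2 : 3 * L * (dr * X / N) = 3 * (dr * L * X) / N := by ring
  rw [e1, e2, div_le_div_iff₀ (by nlinarith) (by nlinarith)]
  have hY : (0:ℝ) ≤ dr * L * X := by positivity
  nlinarith [mul_nonneg hY (by nlinarith : (0:ℝ) ≤ N)]

lemma exp_dL (hq3 : 3 ≤ Fintype.card Fq) (P : MIrr Fq) :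
    Real.exp ((P.1.natDegree : ℝ) * Real.log (Fintype.card Fq)) = pnorm P.1 := by
  have h0 : (0:ℝ) < (Fintype.card Fq : ℝ) := by
    have := hq1R hq3; linarith
  rw [Real.exp_nat_mul, Real.exp_log h0]
  rfl

lemma EE_zero (hq3 : 3 ≤ Fintype.card Fq) (P : MIrr Fq) :
    EE P 0 = (((pnorm P.1)⁻¹ : ℝ) : ℂ) := by
  rw [EE]
  have harg : (-(1 + 2*(0:ℂ)) * ((P.1.natDegree : ℂ) * (Real.log (Fintype.card Fq) : ℝ)))
      = ((-((P.1.natDegree : ℝ) * Real.log (Fintype.card Fq)) : ℝ) : ℂ) := by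
    push_cast; ring
  rw [harg, ← Complex.ofReal_exp, Real.exp_neg, exp_dL hq3]

lemma rr_pos (hq3 : 3 ≤ Fintype.card Fq) (P : MIrr Fq) : 0 < rr P := by
  have hN := hN3 hq3 P
  have h12 : (12:ℝ) ≤ (pnorm P.1 + 1) * pnorm P.1 := by nlinarith
  have : ((pnorm P.1 + 1) * pnorm P.1)⁻¹ ≤ 1/12 := by
    rw [inv_le_comm₀ (by nlinarith) (by norm_num)]
    linarith
  rw [rr]; linarith

lemma rr_inv_le (hq3 : 3 ≤ Fintype.card Fq) (P : MIrr Fq) :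
    ((pnorm P.1 + 1) * pnorm P.1)⁻¹ ≤ 1/12 := by
  have hN := hN3 hq3 P
  rw [inv_le_comm₀ (by nlinarith) (by norm_num)]
  nlinarith

lemma FF_zero (hq3 : 3 ≤ Fintype.card Fq) (P : MIrr Fq) :
    FF P 0 = ((rr P : ℝ) : ℂ) := by
  have hN := hN3 hq3 P
  have hreal : rr P = 1 - (pnorm P.1)⁻¹ / (pnorm P.1 + 1) := by
    rw [rr, mul_inv]; ring
  rw [FF, EE_zero hq3, hreal]
  push_cast
  ring

lemma gg_zero (hq3 : 3 ≤ Fintype.card Fq) (P : MIrr Fq) :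
    gg P 0 = ((Real.log (rr P) : ℝ) : ℂ) := by
  rw [gg, FF_zero hq3, Complex.ofReal_log (le_of_lt (rr_pos hq3 P))]

lemma gg'_zero (hq3 : 3 ≤ Fintype.card Fq) (P : MIrr Fq) :
    gg' P 0 = ((2 * Real.log (Fintype.card Fq) *
      ((P.1.natDegree : ℝ) / (pnorm P.1 * (pnorm P.1 + 1) - 1)) : ℝ) : ℂ) := by
  have hN := hN3 hq3 P
  have hrr := rr_pos hq3 P
  have hcast : gg' P 0 = (((2 * ((P.1.natDegree : ℝ) * Real.log (Fintype.card Fq)) *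
      (pnorm P.1)⁻¹ / (pnorm P.1 + 1)) / rr P : ℝ) : ℂ) := by
    rw [gg', FF', FF_zero hq3, EE_zero hq3]
    push_cast
    ring
  rw [hcast]
  norm_cast
  have h1 : pnorm P.1 ≠ 0 := by nlinarith
  have h2 : pnorm P.1 + 1 ≠ 0 := by nlinarith
  have h3 : pnorm P.1 * (pnorm P.1 + 1) - 1 ≠ 0 := by nlinarith
  have key : rr P = (pnorm P.1 * (pnorm P.1 + 1) - 1) / ((pnorm P.1 + 1) * pnorm P.1) := by
    rw [rr]; field_simp
  rw [key]
  field_simp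

lemma factor_eq (hq3 : 3 ≤ Fintype.card Fq) (P : MIrr Fq) {z : ℂ} (hz : z ∈ tset) :
    (1 - Complex.exp (-(1 + 2 * z) * ((P.1.natDegree : ℂ) * Real.log (Fintype.card Fq)))) *
      ((1 / 2) *
        ((1 - Complex.exp (-(1 / 2 + z) *
            ((P.1.natDegree : ℂ) * Real.log (Fintype.card Fq))))⁻¹ +
         (1 + Complex.exp (-(1 / 2 + z) *
            ((P.1.natDegree : ℂ) * Real.log (Fintype.card Fq))))⁻¹) +
        ((pnorm P.1 : ℝ) : ℂ)⁻¹) *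
      (1 + ((pnorm P.1 : ℝ) : ℂ)⁻¹)⁻¹ = FF P z := by
  have hN := hN3 hq3 P
  have hL := hL0 hq3
  have hd : (1:ℝ) ≤ P.1.natDegree := by exact_mod_cast hd1 P
  set e := Complex.exp (-(1 / 2 + z) * ((P.1.natDegree : ℂ) * Real.log (Fintype.card Fq)))
    with he
  have he2 : Complex.exp (-(1 + 2 * z) * ((P.1.natDegree : ℂ) * Real.log (Fintype.card Fq)))
      = e ^ 2 := by
    rw [he, sq, ← Complex.exp_add]
    congr 1
    ring
  have henorm : ‖e‖ < 1 := by
    rw [he, Complex.norm_exp]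
    have harg : (-(1 / 2 + z) * ((P.1.natDegree : ℂ) * (Real.log (Fintype.card Fq) : ℝ)))
        = ((((P.1.natDegree : ℝ) * Real.log (Fintype.card Fq)) : ℝ) : ℂ) * (-(1/2 + z)) := by
      push_cast; ring
    rw [harg, Complex.re_ofReal_mul]
    apply Real.exp_lt_one_iff.mpr  -- CHECKNAME
    have hre : -(1/4 : ℝ) < z.re := hz
    have : (-(1/2 + z)).re = -(1/2 + z.re) := by simp
    rw [this]
    exact mul_neg_of_pos_of_neg (by nlinarith) (by linarith)
  have h1 : (1:ℂ) - e ≠ 0 := by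
    intro h
    have : e = 1 := by linear_combination -h
    rw [this] at henorm; simp at henorm
  have h1' : (1:ℂ) + e ≠ 0 := by
    intro h
    have : e = -1 := by linear_combination h
    rw [this] at henorm; simp at henorm
  have hM : ((pnorm P.1 : ℝ) : ℂ) ≠ 0 := by
    rw [Complex.ofReal_ne_zero]; nlinarith
  have hM1 : ((pnorm P.1 : ℝ) : ℂ) + 1 ≠ 0 := by
    intro h
    have h2 : (((pnorm P.1 + 1 : ℝ)) : ℂ) = 0 := by push_cast; linear_combination h
    rw [Complex.ofReal_eq_zero] at h2
    nlinarith
  have hMi : (1 : ℂ) + ((pnorm P.1 : ℝ) : ℂ)⁻¹ ≠ 0 := by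
    intro h
    have h2 : ((pnorm P.1 : ℝ) : ℂ) + 1 = 0 := by
      field_simp at h
      linear_combination h
    exact hM1 h2
  rw [FF, EE, he2]
  rw [show (((pnorm P.1 + 1 : ℝ)) : ℂ) = ((pnorm P.1 : ℝ) : ℂ) + 1 by push_cast; ring]
  field_simp
  ring

lemma summable_uu (hq3 : 3 ≤ Fintype.card Fq) : Summable (uu (Fq := Fq)) := by
  have hL := hL0 hq3
  have hq0 : (0:ℝ) < (Fintype.card Fq : ℝ) := by have := hq1R hq3; linarith
  have base : Summable (fun n : ℕ => (n:ℝ) * (Real.exp (-(Real.log (Fintype.card Fq)/2)))^n) := by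
    have hr : ‖Real.exp (-(Real.log (Fintype.card Fq)/2))‖ < 1 := by
      rw [Real.norm_eq_abs, abs_of_pos (Real.exp_pos _)]
      exact Real.exp_lt_one_iff.mpr (by linarith)
    simpa using summable_pow_mul_geometric_of_norm_lt_one 1 hr
  have base' : Summable (fun n : ℕ =>
      3 * Real.log (Fintype.card Fq) * ((n:ℝ) * (Real.exp (-(Real.log (Fintype.card Fq)/2)))^n)) :=
    base.mul_left _
  apply summable_deg (c := fun n => 3 * Real.log (Fintype.card Fq) *
    ((n:ℝ) * Real.exp (-((n:ℝ) * Real.log (Fintype.card Fq)) / 2) / (Fintype.card Fq : ℝ) ^ n))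
  · intro n
    positivity
  · apply base'.congr
    intro n
    have hqn : (Fintype.card Fq : ℝ) ^ n ≠ 0 := by positivity
    have hexp : Real.exp (-((n:ℝ) * Real.log (Fintype.card Fq)) / 2)
        = (Real.exp (-(Real.log (Fintype.card Fq)/2)))^n := by
      rw [← Real.exp_nat_mul]
      congr 1
      ring
    rw [hexp]
    field_simp

lemma summable_target (hq3 : 3 ≤ Fintype.card Fq) :
    Summable (fun P : MIrr Fq => (P.1.natDegree : ℝ) / (pnorm P.1 * (pnorm P.1 + 1) - 1)) := by
  have hq0 : (0:ℝ) < (Fintype.card Fq : ℝ) := by have := hq1R hq3; linarith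
  have hq1 : (1:ℝ) ≤ (Fintype.card Fq : ℝ) := by have := hq1R hq3; linarith
  have hQ1 : ∀ n : ℕ, (1:ℝ) ≤ (Fintype.card Fq : ℝ) ^ n := fun n => one_le_pow₀ hq1
  exact summable_deg (c := fun n => (n:ℝ) /
      ((Fintype.card Fq : ℝ) ^ n * ((Fintype.card Fq : ℝ) ^ n + 1) - 1))
    (fun n => div_nonneg (Nat.cast_nonneg n) (by have := hQ1 n; nlinarith))
    (by
      have base : Summable (fun n : ℕ => (n:ℝ) * ((Fintype.card Fq : ℝ)⁻¹)^n) := by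
        have hr : ‖(Fintype.card Fq : ℝ)⁻¹‖ < 1 := by
          rw [Real.norm_eq_abs, abs_of_pos (by positivity)]
          rw [inv_lt_one_iff₀]
          right; exact hq1R hq3
        simpa using summable_pow_mul_geometric_of_norm_lt_one 1 hr
      apply Summable.of_nonneg_of_le ?_ ?_ base
      · intro n
        have := hQ1 n
        apply mul_nonneg (by positivity) (div_nonneg (Nat.cast_nonneg n) (by nlinarith))
      · intro n
        set Q : ℝ := (Fintype.card Fq : ℝ) ^ n
        have hQ : (1:ℝ) ≤ Q := hQ1 n
        have hD : (0:ℝ) < Q * (Q + 1) - 1 := by nlinarith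
        have h1 : Q * ((n:ℝ) / (Q * (Q + 1) - 1)) = Q * (n:ℝ) / (Q * (Q + 1) - 1) :=
          (mul_div_assoc _ _ _).symm
        have h2 : (n:ℝ) * ((Fintype.card Fq : ℝ)⁻¹)^n = (n:ℝ) / Q := by
          rw [inv_pow]; ring
        rw [h1, h2, div_le_div_iff₀ hD (by linarith)]
        have hn0 : (0:ℝ) ≤ (n:ℝ) := Nat.cast_nonneg n
        nlinarith)

lemma summable_log_rr (hq3 : 3 ≤ Fintype.card Fq) :
    Summable (fun P : MIrr Fq => Real.log (rr P)) := by
  have hq0 : (0:ℝ) < (Fintype.card Fq : ℝ) := by have := hq1R hq3; linarith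
  have hq1 : (1:ℝ) ≤ (Fintype.card Fq : ℝ) := by have := hq1R hq3; linarith
  have hQ1 : ∀ n : ℕ, (1:ℝ) ≤ (Fintype.card Fq : ℝ) ^ n := fun n => one_le_pow₀ hq1
  apply Summable.of_abs
  have hc : Summable (fun P : MIrr Fq =>
      2 / ((Fintype.card Fq : ℝ) ^ P.1.natDegree * (Fintype.card Fq : ℝ) ^ P.1.natDegree)) := by
    apply summable_deg (c := fun n => 2 / ((Fintype.card Fq : ℝ) ^ n * (Fintype.card Fq : ℝ) ^ n))
    · intro n
      positivity
    · have base : Summable (fun n : ℕ => 2 * ((Fintype.card Fq : ℝ)⁻¹)^n) := by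
        apply Summable.mul_left
        apply summable_geometric_of_lt_one (by positivity)
        rw [inv_lt_one_iff₀]; right; exact hq1R hq3
      apply base.congr
      intro n
      have : (Fintype.card Fq : ℝ) ^ n ≠ 0 := by positivity
      rw [inv_pow]
      field_simp
  apply Summable.of_nonneg_of_le (fun P => abs_nonneg _) ?_ hc
  intro P
  have hN := hN3 hq3 P
  have hx0 : (0:ℝ) ≤ ((pnorm P.1 + 1) * pnorm P.1)⁻¹ := by positivity
  have hx2 : ((pnorm P.1 + 1) * pnorm P.1)⁻¹ ≤ 1/2 := le_trans (rr_inv_le hq3 P) (by norm_num)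
  have h := abs_log_one_sub_le hx0 hx2
  rw [rr]
  refine h.trans ?_
  have hqd : (Fintype.card Fq : ℝ) ^ P.1.natDegree = pnorm P.1 := rfl
  rw [hqd]
  have h1 : pnorm P.1 * pnorm P.1 ≤ (pnorm P.1 + 1) * pnorm P.1 := by nlinarith
  have h2 : ((pnorm P.1 + 1) * pnorm P.1)⁻¹ ≤ (pnorm P.1 * pnorm P.1)⁻¹ :=
    inv_anti₀ (by nlinarith) h1
  rw [div_eq_mul_inv]
  linarith

end facts

end Stmt8Aux



open Stmt8Aux

/-- for `k = 1`, `z ↦ A(1/2;z)` is differentiable at `z = 0` with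
`A'(1/2;0) = A(1/2;0)·(2 log q)·Σ_P deg(P)/(|P|(|P|+1)−1)`, where
`A(1/2;0) = ∏_P (1 − 1/((|P|+1)|P|))` and the series converges absolutely. -/
theorem stmt_8 {Fq : Type*} [Field Fq] [Fintype Fq] (hq : Odd (Fintype.card Fq)) :
    Summable (fun P : {P : Polynomial Fq // P.Monic ∧ Irreducible P} =>
      (P.1.natDegree : ℝ) / (pnorm P.1 * (pnorm P.1 + 1) - 1)) ∧
    HasDerivAt (eulerA1 Fq)
      ((( ∏' P : {P : Polynomial Fq // P.Monic ∧ Irreducible P},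
            (1 - ((pnorm P.1 + 1) * pnorm P.1)⁻¹)) *
          (2 * Real.log (Fintype.card Fq)) *
          ∑' P : {P : Polynomial Fq // P.Monic ∧ Irreducible P},
            (P.1.natDegree : ℝ) / (pnorm P.1 * (pnorm P.1 + 1) - 1) : ℝ) : ℂ)
      0 := by
  have hq3 : 3 ≤ Fintype.card Fq := by
    have h1 : 1 < Fintype.card Fq := Fintype.one_lt_card
    have h2 := Nat.odd_iff.mp hq
    omega
  refine ⟨summable_target hq3, ?_⟩
  classical
  have ht : IsOpen (tset) := isOpen_lt continuous_const Complex.continuous_re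
  have hconn : IsPreconnected (tset) := (convex_halfSpace_re_gt _).isPreconnected
  have h0t : (0:ℂ) ∈ tset := by
    show -(1/4 : ℝ) < (0:ℂ).re
    norm_num
  have hu := summable_uu (Fq := Fq) hq3
  have hg0 : Summable (fun P : MIrr Fq => gg P 0) := by
    have h0 := summable_log_rr (Fq := Fq) hq3
    have h' : Summable (fun P : MIrr Fq => ((Real.log (rr P) : ℝ) : ℂ)) := by
      exact_mod_cast h0
    exact h'.congr (fun P => (gg_zero hq3 P).symm)
  have hS := hasDerivAt_tsum_of_isPreconnected hu ht hconn
    (fun P y hy => hasDerivAt_gg hq3 P hy)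
    (fun P y hy => gg'_bound hq3 P hy) h0t hg0 h0t
  have hsummable_z : ∀ z ∈ tset, Summable (fun P : MIrr Fq => gg P z) := fun z hz =>
    summable_of_summable_hasDerivAt_of_isPreconnected hu ht hconn
      (fun P y hy => hasDerivAt_gg hq3 P hy)
      (fun P y hy => gg'_bound hq3 P hy) h0t hg0 hz
  have hprod : ∀ z ∈ tset,
      HasProd (fun P : MIrr Fq => FF P z) (Complex.exp (∑' P : MIrr Fq, gg P z)) := by
    intro z hz
    have h := (hsummable_z z hz).hasSum.cexp
    have hfun : (Complex.exp ∘ fun P : MIrr Fq => gg P z) = fun P : MIrr Fq => FF P z := by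
      funext P
      simp only [Function.comp_apply, gg]
      exact Complex.exp_log (FF_ne hq3 P hz)
    rwa [hfun] at h
  have htmem : tset ∈ nhds (0:ℂ) := ht.mem_nhds h0t
  have hG : HasDerivAt (fun z => ∏' P : MIrr Fq, FF P z)
      (Complex.exp (∑' P : MIrr Fq, gg P 0) * ∑' P : MIrr Fq, gg' P 0) 0 := by
    refine (hS.cexp).congr_of_eventuallyEq ?_
    filter_upwards [htmem] with z hz
    exact ((hprod z hz).tprod_eq)
  have hEA : HasDerivAt (eulerA1 Fq)
      (Complex.exp (∑' P : MIrr Fq, gg P 0) * ∑' P : MIrr Fq, gg' P 0) 0 := by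
    refine hG.congr_of_eventuallyEq ?_
    filter_upwards [htmem] with z hz
    exact tprod_congr (fun P => factor_eq hq3 P hz)
  have hlog0 : (∑' P : MIrr Fq, gg P 0) = ((∑' P : MIrr Fq, Real.log (rr P) : ℝ) : ℂ) := by
    rw [tsum_congr (fun P => gg_zero hq3 P)]
    norm_cast
  have hexp0 : Complex.exp (((∑' P : MIrr Fq, Real.log (rr P) : ℝ)) : ℂ)
      = ((∏' P : MIrr Fq, rr P : ℝ) : ℂ) := by
    rw [← Complex.ofReal_exp]
    norm_cast
    have := Real.rexp_tsum_eq_tprod (f := fun P : MIrr Fq => rr P)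
      (fun P => rr_pos hq3 P) (summable_log_rr hq3)
    simpa using this
  have hsum0 : (∑' P : MIrr Fq, gg' P 0)
      = ((2 * Real.log (Fintype.card Fq) * ∑' P : MIrr Fq,
          ((P.1.natDegree : ℝ) / (pnorm P.1 * (pnorm P.1 + 1) - 1)) : ℝ) : ℂ) := by
    rw [tsum_congr (fun P => gg'_zero hq3 P)]
    norm_cast
    exact tsum_mul_left
  have hval : Complex.exp (∑' P : MIrr Fq, gg P 0) * (∑' P : MIrr Fq, gg' P 0)
      = ((( ∏' P : {P : Polynomial Fq // P.Monic ∧ Irreducible P},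
            (1 - ((pnorm P.1 + 1) * pnorm P.1)⁻¹)) *
          (2 * Real.log (Fintype.card Fq)) *
          ∑' P : {P : Polynomial Fq // P.Monic ∧ Irreducible P},
            (P.1.natDegree : ℝ) / (pnorm P.1 * (pnorm P.1 + 1) - 1) : ℝ) : ℂ) := by
    rw [hlog0, hexp0, hsum0, ← Complex.ofReal_mul]
    norm_cast
    simp only [rr]
    ring
  exact hval ▸ hEA
end

section
/- Fix a real number x and let f(z) = A(1/2; z) · ζ_A(1+2z) · q^{-z/2} · q^{xz/2} / z. Then f has a pole of order 2 at z = 0, and for all sufficiently small ρ > 0 one has (1/(πi)) ∮_{|z|=ρ} f(z) dz = (1/2)·P(1)·{ x + 1 + 4 Σ_{P monic irreducible} deg(P)/( |P|(|P|+1) − 1 ) }, where P(1) = ∏_{P monic irreducible} ( 1 − 1/((|P|+1)|P|) ). Equivalently, the residue of f at z = 0 equals (1/4)P(1)(1+x) + P(1)·Σ_{P} deg(P)/(|P|(|P|+1)−1). -/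
/-- The integrand `f(z) = A(1/2;z)·ζ_A(1+2z)·q^{-z/2}·q^{xz/2}/z`, where
`ζ_A(1+2z) = 1/(1 − q^{-2z})` and `q^w = exp(w·log q)`. -/
noncomputable def integrand9 (Fq : Type*) [Field Fq] [Fintype Fq] (x : ℝ) (z : ℂ) : ℂ :=
  eulerA1 Fq z * (1 - Complex.exp (-2 * z * Real.log (Fintype.card Fq)))⁻¹ *
    Complex.exp (-(z / 2) * Real.log (Fintype.card Fq)) *
    Complex.exp (((x : ℂ) * z / 2) * Real.log (Fintype.card Fq)) / z


namespace Stmt9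

open Filter Complex Polynomial



noncomputable def Dcoef (c : ℂ) (n : ℕ) : ℂ :=
  (-1 : ℂ) ^ n * c ^ (n + 1) / (Nat.factorial (n + 1) : ℂ)

noncomputable def Dfun (c : ℂ) (z : ℂ) : ℂ := ∑' n : ℕ, Dcoef c n * z ^ n

lemma exp_eq_tsum_div (w : ℂ) :
    Complex.exp w = ∑' n : ℕ, w ^ n / (Nat.factorial n : ℂ) := by
  rw [Complex.exp_eq_exp_ℂ, NormedSpace.exp_eq_tsum_div]

lemma Dfun_eq {c z : ℂ} (hz : z ≠ 0) : Dfun c z = (1 - Complex.exp (-(c * z))) / z := by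
  have hsum : Summable fun n : ℕ => (-(c * z)) ^ n / (Nat.factorial n : ℂ) :=
    NormedSpace.expSeries_div_summable _
  have h2 : (∑' n : ℕ, (-(c * z)) ^ n / (Nat.factorial n : ℂ)) =
      1 + ∑' n : ℕ, (-(c * z)) ^ (n + 1) / (Nat.factorial (n + 1) : ℂ) := by
    rw [hsum.tsum_eq_zero_add]
    norm_num
  have h3 : (1 : ℂ) - Complex.exp (-(c * z)) =
      ∑' n : ℕ, -((-(c * z)) ^ (n + 1) / (Nat.factorial (n + 1) : ℂ)) := by
    rw [exp_eq_tsum_div, h2, tsum_neg]; ring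
  have h4 : ∀ n : ℕ, -((-(c * z)) ^ (n + 1) / (Nat.factorial (n + 1) : ℂ)) =
      (Dcoef c n * z ^ n) * z := by
    intro n
    have hfac : ((Nat.factorial (n + 1) : ℂ)) ≠ 0 := by
      exact_mod_cast Nat.factorial_ne_zero (n + 1)
    rw [neg_pow, mul_pow, Dcoef]
    field_simp
    ring
  rw [h3, tsum_congr h4, tsum_mul_right, Dfun]
  field_simp

lemma Dfun_zero (c : ℂ) : Dfun c 0 = c := by
  rw [Dfun, tsum_eq_single 0]
  · simp [Dcoef, Nat.factorial]
  · intro n hn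
    rw [zero_pow hn, mul_zero]

lemma Dcoef_bound (c : ℂ) (n : ℕ) (w : ℂ) (hw : ‖w‖ < 1) :
    ‖Dcoef c n * w ^ n‖ ≤ ‖c‖ * (‖c‖ ^ n / Nat.factorial n) := by
  have hnorm : ‖Dcoef c n * w ^ n‖
      = ‖c‖ ^ (n + 1) / (Nat.factorial (n + 1) : ℝ) * ‖w‖ ^ n := by
    simp [Dcoef, norm_mul, norm_div, norm_pow, abs_of_nonneg]
  rw [hnorm]
  have h2 : ((Nat.factorial n : ℝ)) ≤ ((Nat.factorial (n + 1) : ℝ)) := by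
    exact_mod_cast Nat.factorial_le (Nat.le_succ n)
  have hf : (0:ℝ) < Nat.factorial n := by exact_mod_cast Nat.factorial_pos n
  have hf1 : (0:ℝ) < Nat.factorial (n + 1) := by exact_mod_cast Nat.factorial_pos (n + 1)
  calc ‖c‖ ^ (n + 1) / (Nat.factorial (n + 1) : ℝ) * ‖w‖ ^ n
      ≤ ‖c‖ ^ (n + 1) / (Nat.factorial (n + 1) : ℝ) * 1 := by
        apply mul_le_mul_of_nonneg_left _ (by positivity)
        exact pow_le_one₀ (norm_nonneg _) hw.le
    _ = ‖c‖ ^ (n + 1) / (Nat.factorial (n + 1) : ℝ) := mul_one _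
    _ ≤ ‖c‖ ^ (n + 1) / (Nat.factorial n : ℝ) := by
        apply div_le_div_of_nonneg_left (by positivity) hf h2
    _ = ‖c‖ * (‖c‖ ^ n / Nat.factorial n) := by rw [pow_succ]; ring

lemma Dfun_diff (c : ℂ) : DifferentiableOn ℂ (Dfun c) (Metric.ball 0 1) := by
  apply Complex.differentiableOn_tsum_of_summable_norm
    (u := fun n : ℕ => ‖c‖ * (‖c‖ ^ n / Nat.factorial n))
  · exact (Real.summable_pow_div_factorial ‖c‖).mul_left _
  · intro n
    exact (differentiable_const _ |>.mul (differentiable_pow n)).differentiableOn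
  · exact Metric.isOpen_ball
  · intro n w hw
    exact Dcoef_bound c n w (by simpa using hw)

set_option maxHeartbeats 1000000 in
lemma Dfun_deriv (c : ℂ) : deriv (Dfun c) 0 = -c ^ 2 / 2 := by
  have h := Complex.hasSum_deriv_of_summable_norm
    (F := fun (n : ℕ) (z : ℂ) => Dcoef c n * z ^ n)
    (u := fun n : ℕ => ‖c‖ * (‖c‖ ^ n / Nat.factorial n)) (z := 0)
    ((Real.summable_pow_div_factorial ‖c‖).mul_left _)
    (fun n => (differentiable_const _ |>.mul (differentiable_pow n)).differentiableOn)
    Metric.isOpen_ball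
    (fun n w hw => Dcoef_bound c n w (by simpa using hw))
    (Metric.mem_ball_self one_pos)
  have hderiv : ∀ n : ℕ,
      deriv (fun z : ℂ => Dcoef c n * z ^ n) 0
      = if n = 1 then -c ^ 2 / 2 else 0 := by
    intro n
    rw [deriv_const_mul _ (differentiable_pow n).differentiableAt, deriv_pow_field]
    match n with
    | 0 => norm_num
    | 1 => norm_num [Dcoef, Nat.factorial]; try ring
    | (m + 2) =>
      rw [if_neg (by omega : ¬ m + 2 = 1), zero_pow (by omega : m + 2 - 1 ≠ 0)]
      ring
  have h1 := (funext hderiv : _) ▸ h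
  have h2 : Dfun c = fun w : ℂ => ∑' n : ℕ, Dcoef c n * w ^ n := rfl
  rw [h2]
  have h3 := h1.unique (hasSum_ite_eq 1 (-c ^ 2 / 2))
  simpa using h3


variable {Fq : Type*} [Field Fq] [Fintype Fq]

abbrev MI (Fq : Type*) [Field Fq] [Fintype Fq] := {P : Polynomial Fq // P.Monic ∧ Irreducible P}

lemma two_le_qR : (2 : ℝ) ≤ (Fintype.card Fq : ℝ) := by
  exact_mod_cast Fintype.one_lt_card (α := Fq)

lemma one_lt_qR : (1 : ℝ) < (Fintype.card Fq : ℝ) := lt_of_lt_of_le one_lt_two two_le_qR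

lemma L_pos : 0 < Real.log (Fintype.card Fq : ℝ) := Real.log_pos one_lt_qR

lemma sqrt_qR_gt_one : 1 < Real.sqrt (Fintype.card Fq : ℝ) := by
  rw [show (1:ℝ) = Real.sqrt 1 by simp]
  exact Real.sqrt_lt_sqrt zero_le_one one_lt_qR

/-- `t = 1/(√q · q)`. -/
noncomputable def tq (Fq : Type*) [Field Fq] [Fintype Fq] : ℝ :=
  (Real.sqrt (Fintype.card Fq : ℝ) * (Fintype.card Fq : ℝ))⁻¹

lemma tq_pos : 0 < tq Fq := by
  have := one_lt_qR (Fq := Fq); have := sqrt_qR_gt_one (Fq := Fq)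
  rw [tq]; positivity

lemma tq_le_half : tq Fq ≤ 1 / 2 := by
  have h2 : (2:ℝ) ≤ Real.sqrt (Fintype.card Fq : ℝ) * (Fintype.card Fq : ℝ) :=
    le_trans (by norm_num : (2:ℝ) ≤ 1 * 2)
      (mul_le_mul sqrt_qR_gt_one.le two_le_qR (by norm_num)
        (le_of_lt (lt_trans one_pos sqrt_qR_gt_one)))
  have := one_div_le_one_div_of_le (by norm_num : (0:ℝ) < 2) h2
  rw [tq]
  rw [inv_eq_one_div]
  linarith

lemma exp_half_log : Real.exp (Real.log (Fintype.card Fq : ℝ) / 2)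
    = Real.sqrt (Fintype.card Fq : ℝ) := by
  have h0 : (0:ℝ) < (Fintype.card Fq : ℝ) := lt_trans one_pos one_lt_qR
  have : (Fintype.card Fq : ℝ) = (Real.exp (Real.log (Fintype.card Fq : ℝ) / 2)) ^ 2 := by
    rw [← Real.exp_nat_mul]
    push_cast
    rw [show (2:ℝ) * (Real.log (Fintype.card Fq : ℝ) / 2) = Real.log (Fintype.card Fq : ℝ)
      by ring, Real.exp_log h0]
  conv_rhs => rw [this]
  rw [Real.sqrt_sq (Real.exp_nonneg _)]

lemma natDegree_pos (P : MI Fq) : 0 < P.1.natDegree := P.2.2.natDegree_pos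

lemma pnorm_ge_two (P : MI Fq) : 2 ≤ pnorm P.1 := by
  rw [pnorm]
  calc (2:ℝ) ≤ (Fintype.card Fq : ℝ) := two_le_qR
    _ = (Fintype.card Fq : ℝ) ^ 1 := (pow_one _).symm
    _ ≤ (Fintype.card Fq : ℝ) ^ P.1.natDegree :=
        pow_le_pow_right₀ (le_of_lt one_lt_qR) (natDegree_pos P)

/-- The simplified Euler factor `1 - |P|^{-(1+2z)}/(|P|+1)`. -/
noncomputable def aP (P : MI Fq) (z : ℂ) : ℂ :=
  1 - Complex.exp (-(1 + 2 * z) * ((P.1.natDegree : ℂ) * Real.log (Fintype.card Fq)))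
      / (((pnorm P.1 : ℝ) : ℂ) + 1)

lemma norm_aP_sub_one (P : MI Fq) {z : ℂ} (hz : -(1/4 : ℝ) ≤ z.re) :
    ‖aP P z - 1‖ ≤ tq Fq ^ P.1.natDegree := by
  have hL := L_pos (Fq := Fq)
  set n := P.1.natDegree with hn
  set L := Real.log (Fintype.card Fq : ℝ) with hLdef
  have harg : (-(1 + 2 * z) * ((n : ℂ) * (L : ℝ))).re = -(1 + 2 * z.re) * (n * L) := by
    have : ((n : ℂ) * ((L : ℝ) : ℂ)) = (((n * L : ℝ)) : ℂ) := by push_cast; ring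
    rw [this, Complex.mul_re]
    simp
    try ring
  have hnorm : ‖Complex.exp (-(1 + 2 * z) * ((n : ℂ) * (L : ℝ)))‖
      = Real.exp (-(1 + 2 * z.re) * (n * L)) := by
    rw [Complex.norm_exp, harg]
  have hexp_le : Real.exp (-(1 + 2 * z.re) * (n * L)) ≤ (Real.sqrt (Fintype.card Fq : ℝ))⁻¹ ^ n := by
    have h1 : -(1 + 2 * z.re) * (n * L) ≤ -(1/2) * (n * L) := by
      have : -(1 + 2 * z.re) ≤ -(1/2 : ℝ) := by linarith
      apply mul_le_mul_of_nonneg_right this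
      positivity
    calc Real.exp (-(1 + 2 * z.re) * (n * L)) ≤ Real.exp (-(1/2) * (n * L)) := Real.exp_le_exp.mpr h1
      _ = (Real.exp (L/2))⁻¹ ^ n := by
          rw [← Real.exp_neg, ← Real.exp_nat_mul]
          congr 1
          ring
      _ = (Real.sqrt (Fintype.card Fq : ℝ))⁻¹ ^ n := by rw [exp_half_log]
  have hKpos : (0:ℝ) < pnorm P.1 := lt_of_lt_of_le two_pos (pnorm_ge_two P)
  have hden : ‖(((pnorm P.1 : ℝ)) : ℂ) + 1‖ = pnorm P.1 + 1 := by
    rw [show (((pnorm P.1 : ℝ)) : ℂ) + 1 = (((pnorm P.1 + 1 : ℝ)) : ℂ) by push_cast; ring]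
    rw [Complex.norm_real, Real.norm_eq_abs, abs_of_pos (by linarith)]
  have : aP P z - 1 = -(Complex.exp (-(1 + 2 * z) * ((n : ℂ) * (L : ℝ)))
      / (((pnorm P.1 : ℝ) : ℂ) + 1)) := by rw [aP]; ring
  rw [this, norm_neg, norm_div, hnorm, hden]
  rw [div_le_iff₀ (by linarith)]
  have hq_le : (Fintype.card Fq : ℝ) ^ n ≤ pnorm P.1 + 1 := by
    rw [pnorm]; linarith
  calc Real.exp (-(1 + 2 * z.re) * (n * L))
      ≤ (Real.sqrt (Fintype.card Fq : ℝ))⁻¹ ^ n := hexp_le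
    _ = tq Fq ^ n * (Fintype.card Fq : ℝ) ^ n := by
        have htqq : tq Fq * (Fintype.card Fq : ℝ) = (Real.sqrt (Fintype.card Fq : ℝ))⁻¹ := by
          rw [tq, mul_inv, mul_assoc, inv_mul_cancel₀ (by
            have := one_lt_qR (Fq := Fq); positivity), mul_one]
        rw [← mul_pow, htqq]
    _ ≤ tq Fq ^ n * (pnorm P.1 + 1) := by
        apply mul_le_mul_of_nonneg_left hq_le
          (le_of_lt (pow_pos (tq_pos (Fq := Fq)) n))
  
lemma tq_pow_le_half (P : MI Fq) : tq Fq ^ P.1.natDegree ≤ 1/2 := by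
  calc tq Fq ^ P.1.natDegree ≤ tq Fq ^ 1 :=
      pow_le_pow_of_le_one (tq_pos (Fq := Fq)).le
        (le_trans tq_le_half (by norm_num)) (natDegree_pos P)
    _ = tq Fq := pow_one _
    _ ≤ 1/2 := tq_le_half

set_option maxHeartbeats 1000000 in
lemma summable_aux (h : ℕ → ℝ) (h0 : ∀ n, 0 ≤ h n)
    (hs : Summable fun n : ℕ => (Fintype.card Fq : ℝ) ^ n * h n) :
    Summable (fun P : MI Fq => h P.1.natDegree) := by
  set T := Σ n : ℕ, (Fin n → Fq) with hT
  have hg : Summable (fun p : T => h p.1) := by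
    rw [summable_sigma_of_nonneg (fun p => h0 p.1)]
    refine ⟨fun n => Summable.of_finite, ?_⟩
    apply hs.congr
    intro n
    have e1 : (fun b : Fin n → Fq => h (⟨n, b⟩ : T).1) = fun _ => h n := rfl
    rw [show (∑' b : Fin n → Fq, h (⟨n, b⟩ : T).1) = ∑' _ : Fin n → Fq, h n from by rw [e1],
      tsum_fintype, Finset.sum_const]
    simp only [Finset.card_univ, Fintype.card_fun, Fintype.card_fin, nsmul_eq_mul]
    push_cast
    ring
  have hi : Function.Injective
      (fun P : MI Fq => (⟨P.1.natDegree, fun i => P.1.coeff i⟩ : T)) := by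
    rintro ⟨P, hPm, hPi⟩ ⟨Q, hQm, hQi⟩ hPQ
    have hdeg : P.natDegree = Q.natDegree := congrArg Sigma.fst hPQ
    have hcoef := (Sigma.mk.inj_iff.mp hPQ).2
    have hcoef' : ∀ i : Fin P.natDegree, P.coeff i = Q.coeff i := by
      intro i
      exact (Fin.heq_fun_iff hdeg).mp hcoef i
    have hPQ' : P = Q := by
      apply Polynomial.ext
      intro i
      rcases lt_trichotomy i P.natDegree with hi | hi | hi
      · exact hcoef' ⟨i, hi⟩
      · subst hi
        rw [hPm.coeff_natDegree, hdeg, hQm.coeff_natDegree]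
      · rw [Polynomial.coeff_eq_zero_of_natDegree_lt hi,
          Polynomial.coeff_eq_zero_of_natDegree_lt (hdeg ▸ hi)]
    exact Subtype.ext hPQ'
  have := hg.comp_injective hi
  exact this

lemma summable_tq_pow : Summable (fun P : MI Fq => 2 * tq Fq ^ P.1.natDegree) := by
  apply summable_aux (h := fun n => 2 * tq Fq ^ n)
  · intro n
    have := tq_pos (Fq := Fq)
    positivity
  · have hgeom : Summable (fun n : ℕ => ((Real.sqrt (Fintype.card Fq : ℝ))⁻¹) ^ n) := by
      apply summable_geometric_of_lt_one
      · positivity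
      · rw [inv_lt_one_iff₀]
        right
        exact sqrt_qR_gt_one
    apply ((hgeom.mul_left 2).congr ?_)
    intro n
    have htqq : tq Fq * (Fintype.card Fq : ℝ) = (Real.sqrt (Fintype.card Fq : ℝ))⁻¹ := by
      rw [tq, mul_inv, mul_assoc, inv_mul_cancel₀ (by
        have := one_lt_qR (Fq := Fq); positivity), mul_one]
    rw [← htqq, mul_pow]
    ring

lemma norm_log_aP (P : MI Fq) {z : ℂ} (hz : -(1/4 : ℝ) ≤ z.re) :
    ‖Complex.log (aP P z)‖ ≤ 2 * tq Fq ^ P.1.natDegree := by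
  have h1 := norm_aP_sub_one P hz
  have h2 := tq_pow_le_half P
  have h3 : ‖aP P z - 1‖ ≤ 1/2 := le_trans h1 h2
  have := Complex.norm_log_one_add_half_le_self (z := aP P z - 1) h3
  rw [show (1 : ℂ) + (aP P z - 1) = aP P z by ring] at this
  calc ‖Complex.log (aP P z)‖ ≤ 3/2 * ‖aP P z - 1‖ := this
    _ ≤ 2 * ‖aP P z - 1‖ := by nlinarith [norm_nonneg (aP P z - 1)]
    _ ≤ 2 * tq Fq ^ P.1.natDegree := by linarith

lemma aP_re_ge (P : MI Fq) {z : ℂ} (hz : -(1/4 : ℝ) ≤ z.re) : (1/2 : ℝ) ≤ (aP P z).re := by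
  have h3 : ‖aP P z - 1‖ ≤ 1/2 := le_trans (norm_aP_sub_one P hz) (tq_pow_le_half P)
  have h4 : |(aP P z - 1).re| ≤ 1/2 := le_trans (Complex.abs_re_le_norm _) h3
  have h5 : (aP P z - 1).re = (aP P z).re - 1 := by simp
  rw [h5] at h4
  have := abs_le.mp h4
  linarith [this.1]

lemma aP_mem_slitPlane (P : MI Fq) {z : ℂ} (hz : -(1/4 : ℝ) ≤ z.re) :
    aP P z ∈ Complex.slitPlane := by
  rw [Complex.mem_slitPlane_iff]
  left
  have := aP_re_ge P hz
  linarith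

lemma aP_ne_zero (P : MI Fq) {z : ℂ} (hz : -(1/4 : ℝ) ≤ z.re) : aP P z ≠ 0 := by
  intro h
  have := aP_re_ge P hz
  rw [h] at this
  simp at this
  linarith

/-- `Sc z = ∑_P log a_P(z)`. -/
noncomputable def Sc (Fq : Type*) [Field Fq] [Fintype Fq] (z : ℂ) : ℂ :=
  ∑' P : MI Fq, Complex.log (aP P z)

lemma aP_hasDerivAt (P : MI Fq) (z : ℂ) :
    HasDerivAt (aP P)
      (2 * (P.1.natDegree : ℂ) * (Real.log (Fintype.card Fq) : ℝ) *
        Complex.exp (-(1 + 2 * z) * ((P.1.natDegree : ℂ) * Real.log (Fintype.card Fq)))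
        / (((pnorm P.1 : ℝ) : ℂ) + 1)) z := by
  set nL : ℂ := (P.1.natDegree : ℂ) * (Real.log (Fintype.card Fq) : ℝ) with hnL
  have hg : HasDerivAt (fun z : ℂ => -(1 + 2 * z) * nL) (-(2 * nL)) z := by
    have h1 : (fun z : ℂ => -(1 + 2 * z) * nL) = fun z : ℂ => (-(2 * nL)) * z + (-nL) := by
      funext w
      ring
    rw [h1]
    simpa using ((hasDerivAt_id z).const_mul (-(2 * nL))).add_const (-nL)
  have hexp := hg.cexp
  have hdiv := hexp.div_const ((((pnorm P.1 : ℝ)) : ℂ) + 1)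
  have hsub := hdiv.const_sub 1
  have : aP P = fun z : ℂ => 1 - Complex.exp (-(1 + 2 * z) * nL) / ((((pnorm P.1 : ℝ)) : ℂ) + 1) :=
    rfl
  rw [this]
  convert hsub using 1
  rfl
  rfl
  ring

lemma log_aP_hasDerivAt (P : MI Fq) {z : ℂ} (hz : -(1/4 : ℝ) ≤ z.re) :
    HasDerivAt (fun w => Complex.log (aP P w))
      ((2 * (P.1.natDegree : ℂ) * (Real.log (Fintype.card Fq) : ℝ) *
        Complex.exp (-(1 + 2 * z) * ((P.1.natDegree : ℂ) * Real.log (Fintype.card Fq)))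
        / (((pnorm P.1 : ℝ) : ℂ) + 1)) / aP P z) z :=
  (aP_hasDerivAt P z).clog (aP_mem_slitPlane P hz)

/-- value of the sum's term at 0, as a real number -/
noncomputable def dP (P : MI Fq) : ℝ :=
  (P.1.natDegree : ℝ) / (pnorm P.1 * (pnorm P.1 + 1) - 1)

lemma exp_neg_nL : ∀ (n : ℕ),
    Complex.exp (-((n : ℂ) * (Real.log (Fintype.card Fq) : ℝ)))
      = ((((Fintype.card Fq : ℝ) ^ n)⁻¹ : ℝ) : ℂ) := by
  intro n
  rw [show -((n : ℂ) * (Real.log (Fintype.card Fq) : ℝ))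
      = ((-(n * Real.log (Fintype.card Fq)) : ℝ) : ℂ) by push_cast; ring]
  rw [← Complex.ofReal_exp]
  congr 1
  rw [Real.exp_neg, Real.exp_nat_mul, Real.exp_log (lt_trans one_pos (one_lt_qR (Fq := Fq)))]

lemma deriv_log_aP_zero (P : MI Fq) :
    deriv (fun w => Complex.log (aP P w)) 0
      = ((2 * Real.log (Fintype.card Fq) * dP P : ℝ) : ℂ) := by
  have h := log_aP_hasDerivAt P (z := 0) (by norm_num)
  rw [h.deriv]
  have hK2 : (2:ℝ) ≤ pnorm P.1 := pnorm_ge_two P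
  have he : Complex.exp (-(1 + 2 * (0:ℂ)) * ((P.1.natDegree : ℂ) * Real.log (Fintype.card Fq)))
      = (((pnorm P.1)⁻¹ : ℝ) : ℂ) := by
    rw [show (-(1 + 2 * (0:ℂ)) * ((P.1.natDegree : ℂ) * Real.log (Fintype.card Fq)))
      = -((P.1.natDegree : ℂ) * (Real.log (Fintype.card Fq) : ℝ)) by ring]
    rw [exp_neg_nL]
    rfl
  have ha0 : aP P 0 = ((1 - (pnorm P.1)⁻¹ / (pnorm P.1 + 1) : ℝ) : ℂ) := by
    rw [show aP P 0 = 1 - Complex.exp (-(1 + 2 * (0:ℂ)) *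
      ((P.1.natDegree : ℂ) * Real.log (Fintype.card Fq))) / (((pnorm P.1 : ℝ) : ℂ) + 1) from rfl,
      he]
    push_cast
    ring
  rw [he, ha0]
  have hKinv : (pnorm P.1)⁻¹ ≤ 1/2 := by
    have := one_div_le_one_div_of_le two_pos hK2
    rw [one_div] at this
    linarith
  have hfrac : (pnorm P.1)⁻¹ / (pnorm P.1 + 1) ≤ (1/2) / 1 :=
    div_le_div₀ (by norm_num) hKinv one_pos (by linarith)
  have haR : (0:ℝ) < 1 - (pnorm P.1)⁻¹ / (pnorm P.1 + 1) := by
    have : (0:ℝ) < (1/2 : ℝ)/1 := by norm_num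
    nlinarith [hfrac]
  have haPne : ((1 - (pnorm P.1)⁻¹ / (pnorm P.1 + 1) : ℝ) : ℂ) ≠ 0 := by
    simp only [ne_eq, Complex.ofReal_eq_zero]
    linarith
  have hKne : ((pnorm P.1 : ℝ) : ℂ) ≠ 0 := by
    simp only [ne_eq, Complex.ofReal_eq_zero]; linarith
  have hK1ne : ((pnorm P.1 : ℝ) : ℂ) + 1 ≠ 0 := by
    rw [show ((pnorm P.1 : ℝ) : ℂ) + 1 = ((pnorm P.1 + 1 : ℝ) : ℂ) by push_cast; ring]
    simp only [ne_eq, Complex.ofReal_eq_zero]; linarith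
  have hdenne : ((pnorm P.1 * (pnorm P.1 + 1) - 1 : ℝ) : ℂ) ≠ 0 := by
    simp only [ne_eq, Complex.ofReal_eq_zero]; nlinarith
  rw [dP]
  rw [div_eq_iff haPne]
  push_cast at hdenne hK1ne hKne haPne ⊢
  field_simp
/-- radius of the working ball -/
noncomputable def rr (Fq : Type*) [Field Fq] [Fintype Fq] : ℝ :=
  min 8⁻¹ (Real.log (Fintype.card Fq))⁻¹

lemma rr_pos : 0 < rr Fq := by
  have := L_pos (Fq := Fq)
  rw [rr]
  positivity

lemma re_ge_of_mem {z : ℂ} (hz : z ∈ Metric.ball (0:ℂ) (rr Fq)) : -(1/4 : ℝ) ≤ z.re := by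
  rw [Metric.mem_ball, dist_zero_right] at hz
  have h1 : ‖z‖ < 8⁻¹ := lt_of_lt_of_le hz (min_le_left _ _)
  have h2 : |z.re| ≤ ‖z‖ := Complex.abs_re_le_norm z
  have := abs_le.mp (le_of_lt (lt_of_le_of_lt h2 h1))
  linarith [this.1]

lemma log_aP_diffOn (P : MI Fq) :
    DifferentiableOn ℂ (fun w => Complex.log (aP P w)) (Metric.ball (0:ℂ) (rr Fq)) := by
  intro z hz
  exact (log_aP_hasDerivAt P (re_ge_of_mem hz)).differentiableAt.differentiableWithinAt

lemma Sc_diffOn :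
    DifferentiableOn ℂ (fun w : ℂ => ∑' P : MI Fq, Complex.log (aP P w))
      (Metric.ball (0:ℂ) (rr Fq)) :=
  Complex.differentiableOn_tsum_of_summable_norm summable_tq_pow
    (fun P => log_aP_diffOn P) Metric.isOpen_ball
    (fun P w hw => norm_log_aP P (re_ge_of_mem hw))

lemma hasSum_deriv_Sc :
    HasSum (fun P : MI Fq => ((2 * Real.log (Fintype.card Fq) * dP P : ℝ) : ℂ))
      (deriv (fun w : ℂ => ∑' P : MI Fq, Complex.log (aP P w)) 0) := by
  have h := Complex.hasSum_deriv_of_summable_norm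
    (F := fun (P : MI Fq) (w : ℂ) => Complex.log (aP P w))
    summable_tq_pow (fun P => log_aP_diffOn P) Metric.isOpen_ball
    (fun P w hw => norm_log_aP P (re_ge_of_mem hw))
    (Metric.mem_ball_self (rr_pos (Fq := Fq)))
  have h2 := (funext (fun P : MI Fq => deriv_log_aP_zero P) : _) ▸ h
  exact h2

/-- the real sum `S = ∑ deg P/(|P|(|P|+1)-1)` -/
noncomputable def Ssum (Fq : Type*) [Field Fq] [Fintype Fq] : ℝ := ∑' P : MI Fq, dP P

lemma hasSum_dP : HasSum (fun P : MI Fq => dP P) (Ssum Fq) := by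
  have h := hasSum_deriv_Sc (Fq := Fq)
  have hre := Complex.reCLM.hasSum h
  have hre' : HasSum (fun P : MI Fq => 2 * Real.log (Fintype.card Fq) * dP P)
      ((deriv (fun w : ℂ => ∑' P : MI Fq, Complex.log (aP P w)) 0).re) := by
    apply hre.congr_fun
    intro P
    exact Complex.ofReal_re _
  have hL := L_pos (Fq := Fq)
  have hdiv := hre'.div_const (2 * Real.log (Fintype.card Fq))
  have : HasSum (fun P : MI Fq => dP P)
      ((deriv (fun w : ℂ => ∑' P : MI Fq, Complex.log (aP P w)) 0).re
        / (2 * Real.log (Fintype.card Fq))) := by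
    apply hdiv.congr_fun
    intro P
    field_simp
  rwa [this.tsum_eq.symm] at this

lemma deriv_Sc_zero :
    deriv (fun w : ℂ => ∑' P : MI Fq, Complex.log (aP P w)) 0
      = ((2 * Real.log (Fintype.card Fq) * Ssum Fq : ℝ) : ℂ) := by
  have h := hasSum_deriv_Sc (Fq := Fq)
  have h2 : HasSum (fun P : MI Fq => ((2 * Real.log (Fintype.card Fq) * dP P : ℝ) : ℂ))
      ((2 * Real.log (Fintype.card Fq) * Ssum Fq : ℝ) : ℂ) := by
    rw [Complex.hasSum_ofReal]
    exact (hasSum_dP (Fq := Fq)).mul_left _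
  exact h.unique h2

lemma re_mul_ofReal (w : ℂ) (a : ℝ) : (w * (a : ℂ)).re = w.re * a := by
  rw [Complex.mul_re, Complex.ofReal_re, Complex.ofReal_im]
  ring

lemma norm_E_lt_one (P : MI Fq) {z : ℂ} (hz : -(1/4 : ℝ) ≤ z.re) :
    ‖Complex.exp (-(1 / 2 + z) * ((P.1.natDegree : ℂ) * Real.log (Fintype.card Fq)))‖ < 1 := by
  have hL := L_pos (Fq := Fq)
  have hn := natDegree_pos P
  rw [Complex.norm_exp]
  apply Real.exp_lt_one_iff.mpr
  have harg : (-(1 / 2 + z) * ((P.1.natDegree : ℂ) * (Real.log (Fintype.card Fq) : ℝ))).re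
      = -(1/2 + z.re) * (P.1.natDegree * Real.log (Fintype.card Fq)) := by
    rw [show ((P.1.natDegree : ℂ) * ((Real.log (Fintype.card Fq) : ℝ) : ℂ))
      = (((P.1.natDegree * Real.log (Fintype.card Fq) : ℝ)) : ℂ) by push_cast; ring,
      re_mul_ofReal]
    have : (-(1 / 2 + z)).re = -(1/2 + z.re) := by simp
    rw [this]
  rw [harg]
  have h1 : (0:ℝ) < 1/2 + z.re + 1/4 + 1/4 := by nlinarith
  have hnL : (0:ℝ) < P.1.natDegree * Real.log (Fintype.card Fq) := by positivity
  nlinarith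

lemma euler_factor_eq (P : MI Fq) {z : ℂ} (hz : -(1/4 : ℝ) ≤ z.re) :
    (1 - Complex.exp (-(1 + 2 * z) * ((P.1.natDegree : ℂ) * Real.log (Fintype.card Fq)))) *
      ((1 / 2) *
        ((1 - Complex.exp (-(1 / 2 + z) *
            ((P.1.natDegree : ℂ) * Real.log (Fintype.card Fq))))⁻¹ +
         (1 + Complex.exp (-(1 / 2 + z) *
            ((P.1.natDegree : ℂ) * Real.log (Fintype.card Fq))))⁻¹) +
        ((pnorm P.1 : ℝ) : ℂ)⁻¹) *
      (1 + ((pnorm P.1 : ℝ) : ℂ)⁻¹)⁻¹ = aP P z := by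
  set E := Complex.exp (-(1 / 2 + z) * ((P.1.natDegree : ℂ) * Real.log (Fintype.card Fq)))
    with hE
  have hE2 : Complex.exp (-(1 + 2 * z) * ((P.1.natDegree : ℂ) * Real.log (Fintype.card Fq)))
      = E ^ 2 := by
    rw [hE, sq, ← Complex.exp_add]
    congr 1
    ring
  have hEnorm : ‖E‖ < 1 := norm_E_lt_one P hz
  have h1 : (1 : ℂ) - E ≠ 0 := by
    intro hc
    rw [sub_eq_zero] at hc
    rw [← hc] at hEnorm
    simp at hEnorm
  have h2 : (1 : ℂ) + E ≠ 0 := by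
    intro hc
    have hEe : E = -1 := by linear_combination hc
    rw [hEe] at hEnorm
    simp at hEnorm
  have hKpos : (0:ℝ) < pnorm P.1 := lt_of_lt_of_le two_pos (pnorm_ge_two P)
  have hKne : ((pnorm P.1 : ℝ) : ℂ) ≠ 0 := by
    simp only [ne_eq, Complex.ofReal_eq_zero]; linarith
  have hK1ne : ((pnorm P.1 : ℝ) : ℂ) + 1 ≠ 0 := by
    rw [show ((pnorm P.1 : ℝ) : ℂ) + 1 = ((pnorm P.1 + 1 : ℝ) : ℂ) by push_cast; ring]
    simp only [ne_eq, Complex.ofReal_eq_zero]; linarith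
  rw [aP, hE2]
  field_simp
  ring

lemma exp_Sc_eq_tprod {z : ℂ} (hz : -(1/4 : ℝ) ≤ z.re) :
    Complex.exp (∑' P : MI Fq, Complex.log (aP P z)) = ∏' P : MI Fq, aP P z := by
  set s := {w : ℂ // -(1/4 : ℝ) ≤ w.re}
  have h := Complex.cexp_tsum_eq_tprod (ι := MI Fq)
    (f := fun P => aP P z)
    (fun P => aP_ne_zero P hz)
    (Summable.of_norm_bounded summable_tq_pow
      (fun P => norm_log_aP P hz))
  exact h

lemma eulerA1_eq_exp_Sc {z : ℂ} (hz : -(1/4 : ℝ) ≤ z.re) :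
    eulerA1 Fq z = Complex.exp (∑' P : MI Fq, Complex.log (aP P z)) := by
  rw [eulerA1, exp_Sc_eq_tprod hz]
  exact tprod_congr (fun P => euler_factor_eq P hz)

/-- The real Euler factor at the center. -/
noncomputable def bP (P : MI Fq) : ℝ := 1 - ((pnorm P.1 + 1) * pnorm P.1)⁻¹

lemma aP_zero_eq (P : MI Fq) : aP P 0 = ((bP P : ℝ) : ℂ) := by
  have hK2 : (2:ℝ) ≤ pnorm P.1 := pnorm_ge_two P
  have he : Complex.exp (-(1 + 2 * (0:ℂ)) * ((P.1.natDegree : ℂ) * Real.log (Fintype.card Fq)))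
      = (((pnorm P.1)⁻¹ : ℝ) : ℂ) := by
    rw [show (-(1 + 2 * (0:ℂ)) * ((P.1.natDegree : ℂ) * Real.log (Fintype.card Fq)))
      = -((P.1.natDegree : ℂ) * (Real.log (Fintype.card Fq) : ℝ)) by ring]
    rw [exp_neg_nL]
    rfl
  rw [show aP P 0 = 1 - Complex.exp (-(1 + 2 * (0:ℂ)) *
    ((P.1.natDegree : ℂ) * Real.log (Fintype.card Fq))) / (((pnorm P.1 : ℝ) : ℂ) + 1) from rfl,
    he, bP]
  have h1 : pnorm P.1 ≠ 0 := by linarith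
  have h2 : pnorm P.1 + 1 ≠ 0 := by linarith
  push_cast
  field_simp

lemma bP_pos (P : MI Fq) : 0 < bP P := by
  have hK2 : (2:ℝ) ≤ pnorm P.1 := pnorm_ge_two P
  rw [bP]
  have : ((pnorm P.1 + 1) * pnorm P.1)⁻¹ ≤ 6⁻¹ := by
    apply inv_anti₀ (by norm_num)
    nlinarith
  linarith

lemma summable_log_bP : Summable (fun P : MI Fq => Real.log (bP P)) := by
  apply Summable.of_norm_bounded (summable_tq_pow (Fq := Fq))
  intro P
  have h := norm_log_aP P (z := 0) (by norm_num)
  rw [aP_zero_eq P, ← Complex.ofReal_log (bP_pos P).le] at h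
  simpa using h

lemma Sc_zero_eq :
    (∑' P : MI Fq, Complex.log (aP P 0))
      = (((∑' P : MI Fq, Real.log (bP P)) : ℝ) : ℂ) := by
  rw [(Complex.hasSum_ofReal.mpr (summable_log_bP (Fq := Fq)).hasSum).tsum_eq.symm]
  apply tsum_congr
  intro P
  rw [aP_zero_eq P, ← Complex.ofReal_log (bP_pos P).le]

lemma exp_Sc_zero :
    Complex.exp (∑' P : MI Fq, Complex.log (aP P 0))
      = (((∏' P : MI Fq, bP P) : ℝ) : ℂ) := by
  rw [Sc_zero_eq, ← Complex.ofReal_exp]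
  congr 1
  have h := Real.rexp_tsum_eq_tprod (ι := MI Fq)
    (f := fun P => bP P) (fun P => bP_pos P)
    (summable_log_bP (Fq := Fq))
  exact h

/-- the analytic function `h` with `f(z) = h(z)/z²` -/
noncomputable def hfun (Fq : Type*) [Field Fq] [Fintype Fq] (x : ℝ) (z : ℂ) : ℂ :=
  Complex.exp (∑' P : MI Fq, Complex.log (aP P z)) *
    Complex.exp (-(z / 2) * Real.log (Fintype.card Fq)) *
    Complex.exp (((x : ℂ) * z / 2) * Real.log (Fintype.card Fq)) *
    (Dfun (2 * ((Real.log (Fintype.card Fq) : ℝ) : ℂ)) z)⁻¹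

lemma rr_le_one : rr Fq ≤ 8⁻¹ := min_le_left _ _

lemma D_ne_zero {z : ℂ} (hz : z ∈ Metric.ball (0:ℂ) (rr Fq)) :
    Dfun (2 * ((Real.log (Fintype.card Fq) : ℝ) : ℂ)) z ≠ 0 := by
  have hL := L_pos (Fq := Fq)
  rcases eq_or_ne z 0 with rfl | hz0
  · rw [Dfun_zero]
    simp only [ne_eq, mul_eq_zero, Complex.ofReal_eq_zero, not_or]
    constructor
    · norm_num
    · linarith
  · rw [Dfun_eq hz0]
    intro hc
    rw [_root_.div_eq_zero_iff] at hc
    rcases hc with hc | hc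
    · rw [sub_eq_zero] at hc
      have := Complex.exp_eq_one_iff.mp hc.symm
      obtain ⟨k, hk⟩ := this
      have hnorm : ‖-(2 * ((Real.log (Fintype.card Fq) : ℝ) : ℂ) * z)‖
          = 2 * Real.log (Fintype.card Fq) * ‖z‖ := by
        rw [show -(2 * ((Real.log (Fintype.card Fq) : ℝ) : ℂ) * z)
          = ((2 * Real.log (Fintype.card Fq) : ℝ) : ℂ) * (-z) by push_cast; ring,
          norm_mul, Complex.norm_real, norm_neg, Real.norm_eq_abs,
          abs_of_pos (by positivity : (0:ℝ) < 2 * Real.log (Fintype.card Fq))]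
      have hz_lt : ‖z‖ < (Real.log (Fintype.card Fq))⁻¹ := by
        rw [Metric.mem_ball, dist_zero_right] at hz
        exact lt_of_lt_of_le hz (min_le_right _ _)
      have hsmall : ‖-(2 * ((Real.log (Fintype.card Fq) : ℝ) : ℂ) * z)‖ < 2 := by
        rw [hnorm]
        calc 2 * Real.log (Fintype.card Fq) * ‖z‖
            < 2 * Real.log (Fintype.card Fq) * (Real.log (Fintype.card Fq))⁻¹ := by
              apply mul_lt_mul_of_pos_left hz_lt (by positivity)
          _ = 2 := by field_simp
      rw [hk] at hsmall
      have hknorm : ‖(k : ℂ) * (2 * Real.pi * Complex.I)‖ = |(k:ℝ)| * (2 * Real.pi) := by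
        rw [show (k : ℂ) * (2 * Real.pi * Complex.I)
          = (((k : ℝ) * (2 * Real.pi) : ℝ) : ℂ) * Complex.I by push_cast; ring,
          norm_mul, Complex.norm_real, Complex.norm_I, mul_one, Real.norm_eq_abs, abs_mul,
          abs_of_pos (by positivity : (0:ℝ) < 2 * Real.pi)]
      rw [hknorm] at hsmall
      have hk0 : k = 0 := by
        by_contra hkne
        have : (1:ℝ) ≤ |(k:ℝ)| := by
          rw [← Int.cast_abs]
          exact_mod_cast Int.one_le_abs (by exact_mod_cast hkne)
        nlinarith [Real.pi_gt_three]
      rw [hk0, Int.cast_zero, zero_mul] at hk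
      have h2L : (2 * ((Real.log (Fintype.card Fq) : ℝ) : ℂ)) ≠ 0 := by
        simp only [ne_eq, mul_eq_zero, Complex.ofReal_eq_zero, not_or]
        constructor
        · norm_num
        · linarith
      rcases mul_eq_zero.mp (neg_eq_zero.mp hk) with h | h
      · exact h2L h
      · exact hz0 h
    · exact hz0 hc

lemma hfun_diffOn (x : ℝ) :
    DifferentiableOn ℂ (hfun Fq x) (Metric.ball (0:ℂ) (rr Fq)) := by
  apply DifferentiableOn.mul
  apply DifferentiableOn.mul
  apply DifferentiableOn.mul
  · exact Sc_diffOn.cexp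
  · apply DifferentiableOn.cexp
    apply DifferentiableOn.mul_const
    exact (differentiable_id.div_const 2).neg.differentiableOn
  · apply DifferentiableOn.cexp
    apply DifferentiableOn.mul_const
    exact ((differentiable_id.const_mul _).div_const 2).differentiableOn
  · apply DifferentiableOn.inv
    · apply (Dfun_diff _).mono
      intro w hw
      rw [Metric.mem_ball, dist_zero_right] at *
      calc ‖w‖ < rr Fq := hw
        _ ≤ 8⁻¹ := rr_le_one
        _ < 1 := by norm_num
    · intro w hw
      exact D_ne_zero hw

lemma key_eq (x : ℝ) {z : ℂ} (hz : z ∈ Metric.ball (0:ℂ) (rr Fq)) (hz0 : z ≠ 0) :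
    z ^ 2 * integrand9 Fq x z = hfun Fq x z := by
  have hD := D_ne_zero (Fq := Fq) hz
  have hDeq := Dfun_eq (c := 2 * ((Real.log (Fintype.card Fq) : ℝ) : ℂ)) hz0
  have hexp_arg : -(2 * ((Real.log (Fintype.card Fq) : ℝ) : ℂ) * z)
      = -2 * z * ((Real.log (Fintype.card Fq) : ℝ) : ℂ) := by ring
  rw [hexp_arg] at hDeq
  have hBne : (1 : ℂ) - Complex.exp (-2 * z * ((Real.log (Fintype.card Fq) : ℝ) : ℂ)) ≠ 0 := by
    intro hc
    rw [hDeq, hc] at hD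
    simp at hD
  rw [integrand9, eulerA1_eq_exp_Sc (re_ge_of_mem hz), hfun, hDeq, inv_div]
  set A := Complex.exp (∑' P : MI Fq, Complex.log (aP P z)) with hAd
  set e1 := Complex.exp (-(z / 2) * ((Real.log (Fintype.card Fq) : ℝ) : ℂ)) with he1d
  set e2 := Complex.exp (((x : ℂ) * z / 2) * ((Real.log (Fintype.card Fq) : ℝ) : ℂ)) with he2d
  set B := 1 - Complex.exp (-2 * z * ((Real.log (Fintype.card Fq) : ℝ) : ℂ)) with hBd
  rw [div_eq_mul_inv, div_eq_mul_inv]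
  rw [show z ^ 2 * (A * B⁻¹ * e1 * e2 * z⁻¹) = (z * z⁻¹) * (z * (A * B⁻¹ * e1 * e2)) by ring,
    mul_inv_cancel₀ hz0, one_mul]
  ring

lemma hasDerivAt_Sc :
    HasDerivAt (fun w : ℂ => ∑' P : MI Fq, Complex.log (aP P w))
      ((2 * Real.log (Fintype.card Fq) * Ssum Fq : ℝ) : ℂ) 0 := by
  have h := (Sc_diffOn (Fq := Fq)).differentiableAt
    (Metric.isOpen_ball.mem_nhds (Metric.mem_ball_self (rr_pos (Fq := Fq))))
  have := h.hasDerivAt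
  rwa [deriv_Sc_zero] at this

lemma deriv_hfun (x : ℝ) :
    deriv (hfun Fq x) 0
      = (((∏' P : MI Fq, bP P) : ℝ) : ℂ) *
          (((Ssum Fq : ℝ) : ℂ) + (((x : ℝ) : ℂ) + 1) / 4) := by
  have hL := L_pos (Fq := Fq)
  have hLne : ((Real.log (Fintype.card Fq) : ℝ) : ℂ) ≠ 0 := by
    simp only [ne_eq, Complex.ofReal_eq_zero]
    linarith
  set Lc : ℂ := ((Real.log (Fintype.card Fq) : ℝ) : ℂ) with hLc
  -- the exponential-of-sum factor
  have hA := (hasDerivAt_Sc (Fq := Fq)).cexp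
  -- e1
  have hlin1 : HasDerivAt (fun w : ℂ => -(w / 2) * Lc) (-(1/2) * Lc) 0 := by
    have h0 : (fun w : ℂ => -(w / 2) * Lc) = fun w : ℂ => (-(1/2) * Lc) * w := by
      funext w
      ring
    rw [h0]
    simpa using (hasDerivAt_id (0:ℂ)).const_mul (-(1/2) * Lc)
  have he1 := hlin1.cexp
  -- e2
  have hlin2 : HasDerivAt (fun w : ℂ => ((x : ℂ) * w / 2) * Lc) (((x:ℂ)/2) * Lc) 0 := by
    have h0 : (fun w : ℂ => ((x : ℂ) * w / 2) * Lc) = fun w : ℂ => (((x:ℂ)/2) * Lc) * w := by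
      funext w
      ring
    rw [h0]
    simpa using (hasDerivAt_id (0:ℂ)).const_mul (((x:ℂ)/2) * Lc)
  have he2 := hlin2.cexp
  -- D⁻¹
  have hDdiff : DifferentiableAt ℂ (Dfun (2 * Lc)) 0 :=
    (Dfun_diff (2 * Lc)).differentiableAt (Metric.isOpen_ball.mem_nhds (by simp))
  have hD : HasDerivAt (Dfun (2 * Lc)) (-(2 * Lc) ^ 2 / 2) 0 := by
    have := hDdiff.hasDerivAt
    rwa [Dfun_deriv] at this
  have hD0 : Dfun (2 * Lc) 0 = 2 * Lc := Dfun_zero _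
  have hD0ne : Dfun (2 * Lc) 0 ≠ 0 := by
    rw [hD0]
    simp only [ne_eq, mul_eq_zero, not_or]
    exact ⟨by norm_num, hLne⟩
  have hDinv := hD.inv hD0ne
  -- assemble
  have htot := ((hA.mul he1).mul he2).mul hDinv
  have hval : deriv (hfun Fq x) 0 = _ := htot.deriv
  rw [hval]
  simp only [Pi.mul_apply, Pi.inv_apply]
  rw [exp_Sc_zero]
  rw [hD0]
  have hz1 : Complex.exp (-(0 / 2 : ℂ) * Lc) = 1 := by
    rw [show -(0/2 : ℂ) * Lc = 0 by ring, Complex.exp_zero]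
  have hz2 : Complex.exp (((x:ℂ) * 0 / 2) * Lc) = 1 := by
    rw [show ((x:ℂ) * 0 / 2) * Lc = 0 by ring, Complex.exp_zero]
  rw [hz1, hz2]
  push_cast
  field_simp
  have hlog : Complex.log ((Fintype.card Fq : ℕ) : ℂ) = Lc := by
    rw [hLc, ← Complex.ofReal_natCast, ← Complex.ofReal_log (by positivity)]
  rw [hlog]
  ring

end Stmt9

open Stmt9

/-- `f(z) = A(1/2;z)ζ_A(1+2z)q^{-z/2}q^{xz/2}/z` has a pole of order `2`
at `z = 0`, and for all sufficiently small `ρ > 0`,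
`(1/(πi))∮_{|z|=ρ} f(z)dz = (1/2)·P(1)·(x + 1 + 4 Σ_P deg(P)/(|P|(|P|+1)−1))`,
with `P(1) = ∏_P (1 − 1/((|P|+1)|P|))`. -/
theorem stmt_9 {Fq : Type*} [Field Fq] [Fintype Fq] (hq : Odd (Fintype.card Fq)) (x : ℝ) :
    (∃ c : ℂ, c ≠ 0 ∧
      Filter.Tendsto (fun z : ℂ => z ^ 2 * integrand9 Fq x z)
        (nhdsWithin 0 {(0 : ℂ)}ᶜ) (nhds c)) ∧
    ∃ ρ₀ : ℝ, 0 < ρ₀ ∧ ∀ ρ : ℝ, 0 < ρ → ρ < ρ₀ →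
      (1 / ((Real.pi : ℂ) * Complex.I)) * (∮ z in C(0, ρ), integrand9 Fq x z) =
        (((1 / 2 : ℝ) * (∏' P : {P : Polynomial Fq // P.Monic ∧ Irreducible P},
              (1 - ((pnorm P.1 + 1) * pnorm P.1)⁻¹)) *
            (x + 1 + 4 * ∑' P : {P : Polynomial Fq // P.Monic ∧ Irreducible P},
              (P.1.natDegree : ℝ) / (pnorm P.1 * (pnorm P.1 + 1) - 1)) : ℝ) : ℂ) := by
  classical
  have hL := L_pos (Fq := Fq)
  have hLcne : ((Real.log (Fintype.card Fq) : ℝ) : ℂ) ≠ 0 := by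
    simp only [ne_eq, Complex.ofReal_eq_zero]
    linarith
  constructor
  · refine ⟨hfun Fq x 0, ?_, ?_⟩
    · rw [hfun]
      apply mul_ne_zero
      apply mul_ne_zero
      apply mul_ne_zero
      · exact Complex.exp_ne_zero _
      · exact Complex.exp_ne_zero _
      · exact Complex.exp_ne_zero _
      · apply inv_ne_zero
        exact D_ne_zero (Metric.mem_ball_self (rr_pos (Fq := Fq)))
    · have hcont : ContinuousAt (hfun Fq x) 0 :=
        ((hfun_diffOn x).differentiableAt
          (Metric.isOpen_ball.mem_nhds (Metric.mem_ball_self (rr_pos (Fq := Fq))))).continuousAt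
      have ht : Filter.Tendsto (hfun Fq x) (nhdsWithin 0 {(0:ℂ)}ᶜ) (nhds (hfun Fq x 0)) :=
        hcont.continuousWithinAt.tendsto
      apply ht.congr'
      filter_upwards [self_mem_nhdsWithin,
        mem_nhdsWithin_of_mem_nhds (Metric.ball_mem_nhds (0:ℂ) (rr_pos (Fq := Fq)))] with z hz1 hz2
      exact (key_eq x hz2 hz1).symm
  · refine ⟨rr Fq, rr_pos, ?_⟩
    intro ρ hρ hρrr
    have hsub : Metric.closedBall (0:ℂ) ρ ⊆ Metric.ball (0:ℂ) (rr Fq) :=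
      Metric.closedBall_subset_ball hρrr
    have hdiff : DifferentiableOn ℂ (hfun Fq x) (Metric.closedBall (0:ℂ) ρ) :=
      (hfun_diffOn x).mono hsub
    have hRpos : 0 < ρ.toNNReal := Real.toNNReal_pos.mpr hρ
    have hcoe : ((ρ.toNNReal : NNReal) : ℝ) = ρ := Real.coe_toNNReal _ hρ.le
    have hdiff' : DifferentiableOn ℂ (hfun Fq x)
        (Metric.closedBall (0:ℂ) ((ρ.toNNReal : NNReal) : ℝ)) := by
      rw [hcoe]
      exact hdiff
    have hps := hdiff'.hasFPowerSeriesOnBall hRpos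
    have hderiv_eq := hps.hasFPowerSeriesAt.deriv
    have hcoeff := cauchyPowerSeries_apply (hfun Fq x) 0 ((ρ.toNNReal : NNReal) : ℝ) 1 1
    rw [hcoe] at hcoeff
    rw [hcoe] at hderiv_eq
    rw [hcoeff] at hderiv_eq
    -- hderiv_eq : deriv (hfun Fq x) 0 = (2πi)⁻¹ • ∮ z in C(0,ρ), (1/(z-0))^1 • (z-0)⁻¹ • hfun z
    have hEq : Set.EqOn (integrand9 Fq x)
        (fun z : ℂ => ((1:ℂ) / (z - 0)) ^ 1 • (z - 0)⁻¹ • hfun Fq x z)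
        (Metric.sphere (0:ℂ) ρ) := by
      intro z hzs
      have hznorm : ‖z‖ = ρ := by
        simpa [Complex.dist_eq] using hzs
      have hz0 : z ≠ 0 := by
        intro h
        rw [h] at hznorm
        simp at hznorm
        linarith
      have hzball : z ∈ Metric.ball (0:ℂ) (rr Fq) := by
        rw [Metric.mem_ball, dist_zero_right, hznorm]
        exact hρrr
      have hk := key_eq x hzball hz0
      simp only [sub_zero, smul_eq_mul, one_div, pow_one]
      field_simp
      linear_combination hk
    rw [circleIntegral.integral_congr hρ.le hEq]
    have hIval : (∮ z in C(0, ρ), ((1:ℂ) / (z - 0)) ^ 1 • (z - 0)⁻¹ • hfun Fq x z)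
        = (2 * Real.pi * Complex.I) * deriv (hfun Fq x) 0 := by
      rw [hderiv_eq, smul_eq_mul]
      have hne : (2 * (Real.pi:ℂ) * Complex.I) ≠ 0 := by
        apply mul_ne_zero
        apply mul_ne_zero
        · norm_num
        · simp only [ne_eq, Complex.ofReal_eq_zero]
          exact Real.pi_ne_zero
        · exact Complex.I_ne_zero
      field_simp
    rw [hIval, deriv_hfun]
    have hprod_eq : (∏' P : {P : Polynomial Fq // P.Monic ∧ Irreducible P},
        (1 - ((pnorm P.1 + 1) * pnorm P.1)⁻¹)) = ∏' P : MI Fq, bP P := rfl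
    have hsum_eq : (∑' P : {P : Polynomial Fq // P.Monic ∧ Irreducible P},
        (P.1.natDegree : ℝ) / (pnorm P.1 * (pnorm P.1 + 1) - 1)) = Ssum Fq := rfl
    rw [hprod_eq, hsum_eq]
    have hπ : ((Real.pi:ℂ)) ≠ 0 := by
      simp only [ne_eq, Complex.ofReal_eq_zero]
      exact Real.pi_ne_zero
    push_cast
    field_simp
    ring
end

section
/- For k = 3 the Euler product A(1/2; z_1, z_2, z_3) evaluated at z_1 = z_2 = z_3 = 0 satisfies A(1/2; 0, 0, 0) = ∏_{P monic irreducible} ( 1 − (12|P|⁵ − 23|P|⁴ + 23|P|³ − 15|P|² + 6|P| − 1)/( |P|⁶(|P|+1) ) ); that is, for every monic irreducible P the local factor (1 − |P|^{-1})⁶ · [ (1/2)( (1 − |P|^{-1/2})^{-3} + (1 + |P|^{-1/2})^{-3} ) + 1/|P| ] · (1 + 1/|P|)^{-1} equals 1 − (12|P|⁵ − 23|P|⁴ + 23|P|³ − 15|P|² + 6|P| − 1)/(|P|⁶(|P|+1)). -/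
lemma key_local' (s : ℝ) (hs1 : 1 < s) :
    (1 - (s ^ 2)⁻¹) ^ 6 *
      ((1 / 2) * (((1 - s⁻¹)⁻¹) ^ 3 + ((1 + s⁻¹)⁻¹) ^ 3) + (s ^ 2)⁻¹) *
      (1 + (s ^ 2)⁻¹)⁻¹ =
    1 - (12 * (s ^ 2) ^ 5 - 23 * (s ^ 2) ^ 4 + 23 * (s ^ 2) ^ 3 - 15 * (s ^ 2) ^ 2
        + 6 * (s ^ 2) - 1) / ((s ^ 2) ^ 6 * (s ^ 2 + 1)) := by
  have hs0 : s ≠ 0 := by positivity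
  have h1m : 1 - s⁻¹ ≠ 0 := sub_ne_zero.mpr (ne_of_gt (inv_lt_one_of_one_lt₀ hs1))
  have h1p : (1:ℝ) + s⁻¹ ≠ 0 := by positivity
  have hsm : s - 1 ≠ 0 := sub_ne_zero.mpr (ne_of_gt hs1)
  have hc1 : (-1 + (s * 3 - s ^ 2 * 3) + s ^ 3) ≠ 0 := by
    intro h
    apply pow_ne_zero 3 hsm
    rw [show (s - 1) ^ 3 = -1 + (s * 3 - s ^ 2 * 3) + s ^ 3 by ring, h]
  have hqp : s ^ 2 + 1 ≠ 0 := by positivity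
  have h2 : (1:ℝ) + (s ^ 2)⁻¹ ≠ 0 := by positivity
  field_simp
  ring

lemma key_local (q : ℝ) (hq : 1 < q) :
    (1 - q⁻¹) ^ 6 *
      ((1 / 2) * (((1 - (Real.sqrt q)⁻¹)⁻¹) ^ 3 + ((1 + (Real.sqrt q)⁻¹)⁻¹) ^ 3) + q⁻¹) *
      (1 + q⁻¹)⁻¹ =
    1 - (12 * q ^ 5 - 23 * q ^ 4 + 23 * q ^ 3 - 15 * q ^ 2 + 6 * q - 1) / (q ^ 6 * (q + 1)) := by
  have hq0 : (0:ℝ) < q := lt_trans one_pos hq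
  have hs2 : Real.sqrt q ^ 2 = q := Real.sq_sqrt hq0.le
  have hs1 : 1 < Real.sqrt q := by
    rw [show (1:ℝ) = Real.sqrt 1 by simp]
    exact Real.sqrt_lt_sqrt one_pos.le hq
  have := key_local' (Real.sqrt q) hs1
  rwa [hs2] at this

/-- for `k = 3`,
`A(1/2;0,0,0) = ∏_P (1 − (12|P|⁵−23|P|⁴+23|P|³−15|P|²+6|P|−1)/(|P|⁶(|P|+1)))`:
for every monic irreducible `P` the local factor
`(1−|P|⁻¹)⁶·[(1/2)((1−|P|^{-1/2})^{-3}+(1+|P|^{-1/2})^{-3})+1/|P|]·(1+1/|P|)⁻¹`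
equals `1 − (12|P|⁵−23|P|⁴+23|P|³−15|P|²+6|P|−1)/(|P|⁶(|P|+1))`. -/
theorem stmt_11 {Fq : Type*} [Field Fq] [Fintype Fq] (hq : Odd (Fintype.card Fq)) :
    (∀ P : Polynomial Fq, P.Monic → Irreducible P →
      (1 - (pnorm P)⁻¹) ^ 6 *
        ((1 / 2) * (((1 - (Real.sqrt (pnorm P))⁻¹)⁻¹) ^ 3 +
            ((1 + (Real.sqrt (pnorm P))⁻¹)⁻¹) ^ 3) + (pnorm P)⁻¹) *
        (1 + (pnorm P)⁻¹)⁻¹ =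
      1 - (12 * pnorm P ^ 5 - 23 * pnorm P ^ 4 + 23 * pnorm P ^ 3 - 15 * pnorm P ^ 2 +
            6 * pnorm P - 1) / (pnorm P ^ 6 * (pnorm P + 1))) ∧
    (∏' P : {P : Polynomial Fq // P.Monic ∧ Irreducible P},
        ((1 - (pnorm P.1)⁻¹) ^ 6 *
          ((1 / 2) * (((1 - (Real.sqrt (pnorm P.1))⁻¹)⁻¹) ^ 3 +
              ((1 + (Real.sqrt (pnorm P.1))⁻¹)⁻¹) ^ 3) + (pnorm P.1)⁻¹) *
          (1 + (pnorm P.1)⁻¹)⁻¹)) =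
      ∏' P : {P : Polynomial Fq // P.Monic ∧ Irreducible P},
        (1 - (12 * pnorm P.1 ^ 5 - 23 * pnorm P.1 ^ 4 + 23 * pnorm P.1 ^ 3 -
            15 * pnorm P.1 ^ 2 + 6 * pnorm P.1 - 1) / (pnorm P.1 ^ 6 * (pnorm P.1 + 1))) := by
  have h : ∀ P : Polynomial Fq, P.Monic → Irreducible P →
      (1 - (pnorm P)⁻¹) ^ 6 *
        ((1 / 2) * (((1 - (Real.sqrt (pnorm P))⁻¹)⁻¹) ^ 3 +
            ((1 + (Real.sqrt (pnorm P))⁻¹)⁻¹) ^ 3) + (pnorm P)⁻¹) *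
        (1 + (pnorm P)⁻¹)⁻¹ =
      1 - (12 * pnorm P ^ 5 - 23 * pnorm P ^ 4 + 23 * pnorm P ^ 3 - 15 * pnorm P ^ 2 +
            6 * pnorm P - 1) / (pnorm P ^ 6 * (pnorm P + 1)) := by
    intro P hm hirr
    apply key_local
    have hc : 2 ≤ Fintype.card Fq := Fintype.one_lt_card
    have hd : 0 < P.natDegree := hirr.natDegree_pos
    have : (2:ℝ) ≤ (Fintype.card Fq : ℝ) := by exact_mod_cast hc
    calc (1:ℝ) < 2 := one_lt_two
      _ ≤ (Fintype.card Fq : ℝ) := this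
      _ = (Fintype.card Fq : ℝ) ^ 1 := (pow_one _).symm
      _ ≤ (Fintype.card Fq : ℝ) ^ P.natDegree := by
          apply pow_le_pow_right₀ (by linarith) hd
      _ = pnorm P := rfl
  exact ⟨h, tprod_congr fun P => h P.1 P.2.1 P.2.2⟩
end

section
/- Let K, Q ≥ 1, let α_1,…,α_K, γ_1,…,γ_Q ∈ ℂ have positive real parts, and let t > 1 be real. Define μ(c) = 1 if c = 0, μ(c) = −1 if c = 1, and μ(c) = 0 if c ≥ 2. Then 1 + (1 + 1/t)^{-1} · Σ_{(a,c) ∈ ℕ^K × ℕ^Q, 0 < Σ_k a_k + Σ_m c_m even} ( ∏_{m=1}^{Q} μ(c_m) ) · t^{ −( Σ_{k=1}^{K} a_k(1/2 + α_k) + Σ_{m=1}^{Q} c_m(1/2 + γ_m) ) } = (1 + 1/t)^{-1} · ( (1/2) · ∏_{m=1}^{Q}(1 − t^{-(1/2+γ_m)}) / ∏_{k=1}^{K}(1 − t^{-(1/2+α_k)}) + (1/2) · ∏_{m=1}^{Q}(1 + t^{-(1/2+γ_m)}) / ∏_{k=1}^{K}(1 + t^{-(1/2+α_k)}) + 1/t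 ), the sum on the left being absolutely convergent. -/
/-- `μ(P^c)`: the Möbius function of `F_q[x]` at a prime power, as a function of the
exponent `c`: `μ(P^0) = 1`, `μ(P^1) = −1`, `μ(P^c) = 0` for `c ≥ 2`. -/
def muExp (c : ℕ) : ℤ := if c = 0 then 1 else if c = 1 then -1 else 0

lemma muHasSum (y : ℂ) : HasSum (fun c : ℕ => ((muExp c : ℤ) : ℂ) * y ^ c) (1 - y) := by
  have h : ∀ c ∉ ({0, 1} : Finset ℕ), ((muExp c : ℤ) : ℂ) * y ^ c = 0 := by
    intro c hc
    simp only [Finset.mem_insert, Finset.mem_singleton, not_or] at hc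
    simp [muExp, hc.1, hc.2]
  have : HasSum (fun c : ℕ => ((muExp c : ℤ) : ℂ) * y ^ c) _ := hasSum_sum_of_ne_finset_zero h
  simpa [muExp, sub_eq_add_neg] using this

lemma muSummableNorm (y : ℂ) : Summable (fun c : ℕ => ‖((muExp c : ℤ) : ℂ) * y ^ c‖) := by
  apply summable_of_ne_finset_zero (s := {0, 1})
  intro c hc
  simp only [Finset.mem_insert, Finset.mem_singleton, not_or] at hc
  simp [muExp, hc.1, hc.2]

/-- products over pi types -/
lemma keyPi {n : ℕ} (g : Fin n → ℕ → ℂ) (h : ∀ i, Summable fun c => ‖g i c‖) :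
    (Summable fun a : Fin n → ℕ => ‖∏ i, g i (a i)‖) ∧
    HasSum (fun a : Fin n → ℕ => ∏ i, g i (a i)) (∏ i, ∑' c, g i c) := by
  induction n with
  | zero =>
      constructor
      · exact .of_finite
      · simpa using hasSum_fintype (fun a : Fin 0 → ℕ => (1 : ℂ))
  | succ n ih =>
      obtain ⟨ihS, ihH⟩ := ih (fun i => g i.succ) (fun i => h i.succ)
      set e := Fin.consEquiv (fun _ : Fin (n+1) => ℕ)
      have hcomp : ∀ z : ℕ × (Fin n → ℕ),
          (∏ i, g i (e z i)) = g 0 z.1 * ∏ i, g i.succ (z.2 i) := by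
        intro z
        have he : (e z : Fin (n+1) → ℕ) = Fin.cons z.1 z.2 := rfl
        rw [Fin.prod_univ_succ, he, Fin.cons_zero]
        simp [Fin.cons_succ]
      have hSnorm : Summable fun z : ℕ × (Fin n → ℕ) =>
          ‖g 0 z.1 * ∏ i, g i.succ (z.2 i)‖ :=
        by have := Summable.mul_norm (h 0) ihS; exact this
      have hS2 : Summable fun z : ℕ × (Fin n → ℕ) =>
          g 0 z.1 * ∏ i, g i.succ (z.2 i) :=
        by have := summable_mul_of_summable_norm (h 0) ihS; exact this
      have htsum : (∑' z : ℕ × (Fin n → ℕ), g 0 z.1 * ∏ i, g i.succ (z.2 i))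
          = (∑' c, g 0 c) * ∑' a : Fin n → ℕ, ∏ i, g i.succ (a i) :=
        by have := tsum_mul_tsum_of_summable_norm (h 0) ihS; exact this.symm
      constructor
      · rw [← e.summable_iff]
        apply hSnorm.congr
        intro z; rw [Function.comp_apply, hcomp z]
      · rw [← e.hasSum_iff]
        have : HasSum (fun z : ℕ × (Fin n → ℕ) => g 0 z.1 * ∏ i, g i.succ (z.2 i))
            (∏ i : Fin (n+1), ∑' c, g i c) := by
          rw [Fin.prod_univ_succ, ← ihH.tsum_eq, ← htsum]
          exact hS2.hasSum
        exact this.congr_fun fun z => hcomp z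

lemma geomPi {n : ℕ} (x : Fin n → ℂ) (hx : ∀ i, ‖x i‖ < 1) :
    (Summable fun a : Fin n → ℕ => ‖∏ i, x i ^ a i‖) ∧
    HasSum (fun a : Fin n → ℕ => ∏ i, x i ^ a i) (∏ i, (1 - x i))⁻¹ := by
  have hnorm : ∀ i, Summable fun c : ℕ => ‖x i ^ c‖ := by
    intro i
    simpa [norm_pow] using summable_geometric_of_lt_one (norm_nonneg (x i)) (hx i)
  obtain ⟨h1, h2⟩ := keyPi (fun i c => x i ^ c) hnorm
  refine ⟨h1, ?_⟩
  rw [Finset.prod_congr rfl fun i _ => tsum_geometric_of_norm_lt_one (hx i),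
    Finset.prod_inv_distrib] at h2
  exact h2

lemma muPi {n : ℕ} (y : Fin n → ℂ) :
    (Summable fun c : Fin n → ℕ => ‖∏ m, ((muExp (c m) : ℤ) : ℂ) * y m ^ c m‖) ∧
    HasSum (fun c : Fin n → ℕ => ∏ m, ((muExp (c m) : ℤ) : ℂ) * y m ^ c m)
      (∏ m, (1 - y m)) := by
  obtain ⟨h1, h2⟩ := keyPi (fun m c => ((muExp c : ℤ) : ℂ) * y m ^ c)
    (fun m => muSummableNorm (y m))
  refine ⟨h1, ?_⟩
  rw [Finset.prod_congr rfl fun m _ => (muHasSum (y m)).tsum_eq] at h2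
  exact h2

lemma combinePi {ι ι' : Type*} {f : ι → ℂ} {g : ι' → ℂ} {A B : ℂ}
    (hf : Summable fun i => ‖f i‖) (hg : Summable fun j => ‖g j‖)
    (hfa : HasSum f A) (hgb : HasSum g B) :
    HasSum (fun z : ι × ι' => f z.1 * g z.2) (A * B) := by
  have hs : Summable fun z : ι × ι' => f z.1 * g z.2 :=
    summable_mul_of_summable_norm hf hg
  have ht := tsum_mul_tsum_of_summable_norm hf hg
  have := hs.hasSum
  rw [← ht, hfa.tsum_eq, hgb.tsum_eq] at this
  exact this

lemma norm_exp_neg_lt_one {z : ℂ} {L : ℝ} (hz : 0 < z.re) (hL : 0 < L) :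
    ‖Complex.exp (-z * L)‖ < 1 := by
  rw [Complex.norm_exp]
  rw [Real.exp_lt_one_iff]
  simp only [Complex.mul_re, Complex.neg_re, Complex.ofReal_re, Complex.neg_im,
    Complex.ofReal_im, mul_zero, sub_zero]
  nlinarith

lemma one_sub_ne_zero_of_norm_lt_one {z : ℂ} (h : ‖z‖ < 1) : 1 - z ≠ 0 := by
  intro h0
  have : z = 1 := by linear_combination -h0
  rw [this] at h; simp at h

lemma one_add_ne_zero_of_norm_lt_one {z : ℂ} (h : ‖z‖ < 1) : 1 + z ≠ 0 := by
  intro h0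
  have : z = -1 := by linear_combination h0 - (1 : ℂ)
  rw [this] at h; simp at h

lemma twist {n : ℕ} (y : Fin n → ℂ) (c : Fin n → ℕ) :
    ∏ i, (-y i) ^ c i = (-1 : ℂ) ^ (∑ i, c i) * ∏ i, y i ^ c i := by
  rw [← Finset.prod_pow_eq_pow_sum, ← Finset.prod_mul_distrib]
  exact Finset.prod_congr rfl fun i _ => neg_pow _ _

lemma twist' {n : ℕ} (y w : Fin n → ℂ) (c : Fin n → ℕ) :
    ∏ i, w i * (-y i) ^ c i = (-1 : ℂ) ^ (∑ i, c i) * ∏ i, w i * y i ^ c i := by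
  rw [← Finset.prod_pow_eq_pow_sum, ← Finset.prod_mul_distrib]
  exact Finset.prod_congr rfl fun i _ => by rw [neg_pow]; ring

lemma expandAux {K Q : ℕ} (α : Fin K → ℂ) (γ : Fin Q → ℂ) (L : ℝ)
    (a : Fin K → ℕ) (c : Fin Q → ℕ) :
    -(∑ k, (a k : ℂ) * (1 / 2 + α k) + ∑ m, (c m : ℂ) * (1 / 2 + γ m)) * (L : ℂ)
    = (∑ k, (a k : ℂ) * (-(1 / 2 + α k) * (L : ℂ)))
      + ∑ m, (c m : ℂ) * (-(1 / 2 + γ m) * (L : ℂ)) := by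
  simp_rw [show ∀ (n : ℕ) (w : ℂ), (n : ℂ) * (-w * (L : ℂ)) = -((n : ℂ) * w * (L : ℂ))
    from fun n w => by ring, Finset.sum_neg_distrib, ← Finset.sum_mul]
  ring

lemma final_algebra (u c A1 B1 A2 B2 : ℂ) (hu : u = 1 + c) (hu0 : u ≠ 0)
    (hA1 : A1 ≠ 0) (hA2 : A2 ≠ 0) :
    1 + u⁻¹ * ((A1⁻¹ * B1 + A2⁻¹ * B2) / 2 - 1)
      = u⁻¹ * (1 / 2 * B1 / A1 + 1 / 2 * B2 / A2 + c) := by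
  subst hu; field_simp; ring

lemma indicator_even {ι κ : Type*} [Fintype ι] [Fintype κ] (G : (ι → ℕ) × (κ → ℕ) → ℂ)
    (hG0 : G 0 = 1) {Sp Sm : ℂ}
    (hp : HasSum G Sp)
    (hm : HasSum (fun p => (-1 : ℂ) ^ ((∑ k, p.1 k) + (∑ m, p.2 m)) * G p) Sm) :
    HasSum (fun p : {p : (ι → ℕ) × (κ → ℕ) //
        0 < (∑ k, p.1 k) + (∑ m, p.2 m) ∧ Even ((∑ k, p.1 k) + (∑ m, p.2 m))} => G p.1)
      ((Sp + Sm) / 2 - 1) := by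
  classical
  have h0 : HasSum (fun p : (ι → ℕ) × (κ → ℕ) => if p = 0 then (1 : ℂ) else 0) 1 :=
    hasSum_ite_eq 0 1
  have h := ((hp.add hm).div_const 2).sub h0
  have hEq : ∀ p : (ι → ℕ) × (κ → ℕ),
      Set.indicator {q : (ι → ℕ) × (κ → ℕ) |
          0 < (∑ k, q.1 k) + (∑ m, q.2 m) ∧ Even ((∑ k, q.1 k) + (∑ m, q.2 m))} G p
      = (G p + (-1 : ℂ) ^ ((∑ k, p.1 k) + (∑ m, p.2 m)) * G p) / 2
          - (if p = 0 then 1 else 0) := by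
    intro p
    by_cases hp0 : p = 0
    · subst hp0
      rw [Set.indicator_of_notMem (by simp)]
      simp [hG0]
    · have hN : 0 < (∑ k, p.1 k) + (∑ m, p.2 m) := by
        rcases Nat.eq_zero_or_pos ((∑ k, p.1 k) + (∑ m, p.2 m)) with h | h
        · exfalso; apply hp0
          rw [Nat.add_eq_zero] at h
          have h1 := Finset.sum_eq_zero_iff.mp h.1
          have h2 := Finset.sum_eq_zero_iff.mp h.2
          exact Prod.ext_iff.mpr ⟨funext fun k => h1 k (Finset.mem_univ k),
            funext fun m => h2 m (Finset.mem_univ m)⟩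
        · exact h
      by_cases he : Even ((∑ k, p.1 k) + (∑ m, p.2 m))
      · have hmem : p ∈ {q : (ι → ℕ) × (κ → ℕ) |
            0 < (∑ k, q.1 k) + (∑ m, q.2 m) ∧ Even ((∑ k, q.1 k) + (∑ m, q.2 m))} := ⟨hN, he⟩
        rw [Set.indicator_of_mem hmem, he.neg_one_pow, if_neg hp0]
        ring
      · rw [Set.indicator_of_notMem (fun hmem => he hmem.2),
          (Nat.not_even_iff_odd.mp he).neg_one_pow, if_neg hp0]
        ring
  exact hasSum_subtype_iff_indicator.mpr (h.congr_fun hEq)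

/-- local-factor identity.  For `t > 1` (playing the role of `|P|`) and
shifts `α`, `γ` with positive real parts,
`1 + (1+1/t)⁻¹ Σ_{0<Σa+Σc even} (∏ μ(c_m)) t^{−(Σ a_k(1/2+α_k)+Σ c_m(1/2+γ_m))}`
equals `(1+1/t)⁻¹·((1/2)∏(1−t^{-(1/2+γ_m)})/∏(1−t^{-(1/2+α_k)})
+ (1/2)∏(1+t^{-(1/2+γ_m)})/∏(1+t^{-(1/2+α_k)}) + 1/t)`, the sum converging
absolutely; here `t^w = exp(w·log t)`. -/
theorem stmt_15 (K Q : ℕ) (hK : 1 ≤ K) (hQ : 1 ≤ Q)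
    (α : Fin K → ℂ) (γ : Fin Q → ℂ)
    (hα : ∀ k, 0 < (α k).re) (hγ : ∀ m, 0 < (γ m).re)
    (t : ℝ) (ht : 1 < t) :
    Summable (fun p : {p : (Fin K → ℕ) × (Fin Q → ℕ) //
        0 < (∑ k, p.1 k) + (∑ m, p.2 m) ∧ Even ((∑ k, p.1 k) + (∑ m, p.2 m))} =>
      ((∏ m, muExp (p.1.2 m) : ℤ) : ℂ) *
        Complex.exp (-(∑ k, (p.1.1 k : ℂ) * (1 / 2 + α k) +
            ∑ m, (p.1.2 m : ℂ) * (1 / 2 + γ m)) * Real.log t)) ∧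
    1 + (1 + (t : ℂ)⁻¹)⁻¹ *
      (∑' p : {p : (Fin K → ℕ) × (Fin Q → ℕ) //
          0 < (∑ k, p.1 k) + (∑ m, p.2 m) ∧ Even ((∑ k, p.1 k) + (∑ m, p.2 m))},
        ((∏ m, muExp (p.1.2 m) : ℤ) : ℂ) *
          Complex.exp (-(∑ k, (p.1.1 k : ℂ) * (1 / 2 + α k) +
              ∑ m, (p.1.2 m : ℂ) * (1 / 2 + γ m)) * Real.log t)) =
      (1 + (t : ℂ)⁻¹)⁻¹ *
        ((1 / 2) * (∏ m, (1 - Complex.exp (-(1 / 2 + γ m) * Real.log t))) /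
            (∏ k, (1 - Complex.exp (-(1 / 2 + α k) * Real.log t))) +
         (1 / 2) * (∏ m, (1 + Complex.exp (-(1 / 2 + γ m) * Real.log t))) /
            (∏ k, (1 + Complex.exp (-(1 / 2 + α k) * Real.log t))) +
         (t : ℂ)⁻¹) := by
  classical
  have hL : 0 < Real.log t := Real.log_pos ht
  have hreα : ∀ k, 0 < (1 / 2 + α k).re := by
    intro k
    have := hα k
    simp only [Complex.add_re]
    norm_num
    linarith
  have hreγ : ∀ m, 0 < (1 / 2 + γ m).re := by
    intro m
    have := hγ m
    simp only [Complex.add_re]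
    norm_num
    linarith
  have hx : ∀ k, ‖Complex.exp (-(1 / 2 + α k) * (Real.log t : ℂ))‖ < 1 :=
    fun k => norm_exp_neg_lt_one (hreα k) hL
  have hy : ∀ m, ‖Complex.exp (-(1 / 2 + γ m) * (Real.log t : ℂ))‖ < 1 :=
    fun m => norm_exp_neg_lt_one (hreγ m) hL
  have hx' : ∀ k, ‖-Complex.exp (-(1 / 2 + α k) * (Real.log t : ℂ))‖ < 1 :=
    fun k => by rw [norm_neg]; exact hx k
  have hy' : ∀ m, ‖-Complex.exp (-(1 / 2 + γ m) * (Real.log t : ℂ))‖ < 1 :=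
    fun m => by rw [norm_neg]; exact hy m
  -- the factorization of the general term
  have hfact : ∀ p : (Fin K → ℕ) × (Fin Q → ℕ),
      ((∏ m, muExp (p.2 m) : ℤ) : ℂ) *
        Complex.exp (-(∑ k, (p.1 k : ℂ) * (1 / 2 + α k) +
            ∑ m, (p.2 m : ℂ) * (1 / 2 + γ m)) * Real.log t)
      = (∏ k, Complex.exp (-(1 / 2 + α k) * (Real.log t : ℂ)) ^ p.1 k) *
        ∏ m, ((muExp (p.2 m) : ℤ) : ℂ) *
          Complex.exp (-(1 / 2 + γ m) * (Real.log t : ℂ)) ^ p.2 m := by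
    intro p
    rw [expandAux α γ (Real.log t) p.1 p.2, Complex.exp_add, Complex.exp_sum,
      Complex.exp_sum]
    simp_rw [Complex.exp_nat_mul]
    push_cast
    rw [Finset.prod_mul_distrib]
    ring
  -- the (+) sum
  have hGplus : HasSum (fun p : (Fin K → ℕ) × (Fin Q → ℕ) =>
      ((∏ m, muExp (p.2 m) : ℤ) : ℂ) *
        Complex.exp (-(∑ k, (p.1 k : ℂ) * (1 / 2 + α k) +
            ∑ m, (p.2 m : ℂ) * (1 / 2 + γ m)) * Real.log t))
      ((∏ k, (1 - Complex.exp (-(1 / 2 + α k) * (Real.log t : ℂ))))⁻¹ *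
        ∏ m, (1 - Complex.exp (-(1 / 2 + γ m) * (Real.log t : ℂ)))) := by
    have h := combinePi (geomPi _ hx).1
      (muPi (fun m => Complex.exp (-(1 / 2 + γ m) * (Real.log t : ℂ)))).1
      (geomPi _ hx).2 (muPi (fun m => Complex.exp (-(1 / 2 + γ m) * (Real.log t : ℂ)))).2
    exact h.congr_fun fun p => hfact p
  -- the (−) sum
  have hGminus : HasSum (fun p : (Fin K → ℕ) × (Fin Q → ℕ) =>
      (-1 : ℂ) ^ ((∑ k, p.1 k) + (∑ m, p.2 m)) *
        (((∏ m, muExp (p.2 m) : ℤ) : ℂ) *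
          Complex.exp (-(∑ k, (p.1 k : ℂ) * (1 / 2 + α k) +
              ∑ m, (p.2 m : ℂ) * (1 / 2 + γ m)) * Real.log t)))
      ((∏ k, (1 + Complex.exp (-(1 / 2 + α k) * (Real.log t : ℂ))))⁻¹ *
        ∏ m, (1 + Complex.exp (-(1 / 2 + γ m) * (Real.log t : ℂ)))) := by
    have h := combinePi (geomPi _ hx').1
      (muPi (fun m => -Complex.exp (-(1 / 2 + γ m) * (Real.log t : ℂ)))).1
      (geomPi _ hx').2 (muPi (fun m => -Complex.exp (-(1 / 2 + γ m) * (Real.log t : ℂ)))).2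
    simp only [sub_neg_eq_add] at h
    refine h.congr_fun fun p => ?_
    rw [hfact p, twist, twist', pow_add]
    ring
  have hG0 : ((∏ m, muExp (((0 : (Fin K → ℕ) × (Fin Q → ℕ)).2) m) : ℤ) : ℂ) *
      Complex.exp (-(∑ k, (((0 : (Fin K → ℕ) × (Fin Q → ℕ)).1) k : ℂ) * (1 / 2 + α k) +
          ∑ m, (((0 : (Fin K → ℕ) × (Fin Q → ℕ)).2) m : ℂ) * (1 / 2 + γ m)) * Real.log t)
      = 1 := by
    simp [muExp]
  have hEven : HasSum (fun p : {p : (Fin K → ℕ) × (Fin Q → ℕ) //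
      0 < (∑ k, p.1 k) + (∑ m, p.2 m) ∧ Even ((∑ k, p.1 k) + (∑ m, p.2 m))} =>
      ((∏ m, muExp (p.1.2 m) : ℤ) : ℂ) *
        Complex.exp (-(∑ k, (p.1.1 k : ℂ) * (1 / 2 + α k) +
            ∑ m, (p.1.2 m : ℂ) * (1 / 2 + γ m)) * Real.log t))
      ((((∏ k, (1 - Complex.exp (-(1 / 2 + α k) * (Real.log t : ℂ))))⁻¹ *
          ∏ m, (1 - Complex.exp (-(1 / 2 + γ m) * (Real.log t : ℂ)))) +
        ((∏ k, (1 + Complex.exp (-(1 / 2 + α k) * (Real.log t : ℂ))))⁻¹ *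
          ∏ m, (1 + Complex.exp (-(1 / 2 + γ m) * (Real.log t : ℂ))))) / 2 - 1) :=
    indicator_even _ hG0 hGplus hGminus
  refine ⟨hEven.summable, ?_⟩
  rw [hEven.tsum_eq]
  have ht0 : (0 : ℝ) < t := lt_trans zero_lt_one ht
  have hu0 : (1 : ℂ) + (t : ℂ)⁻¹ ≠ 0 := by
    have hcast : ((1 + t⁻¹ : ℝ) : ℂ) = 1 + (t : ℂ)⁻¹ := by push_cast; ring
    rw [← hcast]
    exact Complex.ofReal_ne_zero.mpr (by positivity)
  have hA1 : (∏ k, (1 - Complex.exp (-(1 / 2 + α k) * (Real.log t : ℂ)))) ≠ 0 :=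
    Finset.prod_ne_zero_iff.mpr fun k _ => one_sub_ne_zero_of_norm_lt_one (hx k)
  have hA2 : (∏ k, (1 + Complex.exp (-(1 / 2 + α k) * (Real.log t : ℂ)))) ≠ 0 :=
    Finset.prod_ne_zero_iff.mpr fun k _ => one_add_ne_zero_of_norm_lt_one (hx k)
  exact final_algebra (1 + (t : ℂ)⁻¹) ((t : ℂ)⁻¹) _ _ _ _ rfl hu0 hA1 hA2
end

section
/- Let K, Q ≥ 1 and let α_1,…,α_K, γ_1,…,γ_Q ∈ ℂ have positive real parts. Then the Euler product A_𝒟(α;γ) admits the closed form A_𝒟(α;γ) = ∏_{P monic irreducible} [ ∏_{j≤k≤K}(1 − |P|^{-(1+α_j+α_k)}) · ∏_{m<r≤Q}(1 − |P|^{-(1+γ_m+γ_r)}) / ∏_{k=1}^{K}∏_{m=1}^{Q}(1 − |P|^{-(1+α_k+γ_m)}) ] · (1 + 1/|P|)^{-1} · ( (1/2) · ∏_{m=1}^{Q}(1 − |P|^{-(1/2+γ_m)}) / ∏_{k=1}^{K}(1 − |P|^{-(1/2+α_k)}) + (1/2) · ∏_{m=1}^{Q}(1 + |P|^{-(1/2+γ_m)})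 / ∏_{k=1}^{K}(1 + |P|^{-(1/2+α_k)}) + 1/|P| ). -/

lemma pi_tsum_prod {n : ℕ} (F : Fin n → ℕ → ℂ) (h : ∀ i, Summable fun j => ‖F i j‖) :
    (Summable fun a : Fin n → ℕ => ‖∏ i, F i (a i)‖) ∧
    (∑' a : Fin n → ℕ, ∏ i, F i (a i)) = ∏ i, ∑' j, F i j := by
  induction n with
  | zero =>
    constructor
    · exact .of_finite
    · simp [tsum_eq_single (fun i => i.elim0 : Fin 0 → ℕ)
        (fun b hb => absurd (funext fun i => i.elim0) hb)]
  | succ n ih =>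
    obtain ⟨ihs, iht⟩ := ih (fun i => F i.succ) (fun i => h i.succ)
    set e : ℕ × (Fin n → ℕ) ≃ (Fin (n+1) → ℕ) := Fin.consEquiv (fun _ : Fin (n+1) => ℕ) with he
    have key : ∀ z : ℕ × (Fin n → ℕ),
        (∏ i, F i (e z i)) = F 0 z.1 * ∏ i, F i.succ (z.2 i) := by
      intro z
      simp only [he, Fin.consEquiv_apply]
      rw [Fin.prod_univ_succ, Fin.cons_zero]
      simp only [Fin.cons_succ]
    have hsz : Summable fun z : ℕ × (Fin n → ℕ) => ‖F 0 z.1 * ∏ i, F i.succ (z.2 i)‖ := by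
      have h2 := Summable.mul_of_nonneg (h 0) ihs (fun a => norm_nonneg _) (fun b => norm_nonneg _)
      exact h2.congr fun z => (norm_mul _ _).symm
    have hsum : Summable fun a : Fin (n+1) → ℕ => ‖∏ i, F i (a i)‖ :=
      (e.summable_iff (f := fun a : Fin (n+1) → ℕ => ‖∏ i, F i (a i)‖)).mp
        (hsz.congr fun z => by rw [Function.comp_apply, key z])
    refine ⟨hsum, ?_⟩
    rw [← e.tsum_eq]
    calc (∑' z : ℕ × (Fin n → ℕ), ∏ i, F i (e z i))
        = ∑' z : ℕ × (Fin n → ℕ), F 0 z.1 * ∏ i, F i.succ (z.2 i) := tsum_congr key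
      _ = (∑' j, F 0 j) * ∑' b : Fin n → ℕ, ∏ i, F i.succ (b i) :=
          (tsum_mul_tsum_of_summable_norm (h 0) ihs).symm
      _ = ∏ i, ∑' j, F i j := by rw [iht, Fin.prod_univ_succ]


lemma mu_vanish (y : ℂ) : ∀ n ∉ ({0, 1} : Finset ℕ), (muExp n : ℂ) * y ^ n = 0 := by
  intro n hn
  simp only [Finset.mem_insert, Finset.mem_singleton, not_or] at hn
  simp [muExp, hn.1, hn.2]

lemma mu_summable (y : ℂ) : Summable fun n => ‖(muExp n : ℂ) * y ^ n‖ :=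
  summable_of_ne_finset_zero (s := {0, 1}) (fun n hn => by rw [mu_vanish y n hn, norm_zero])

lemma mu_tsum (y : ℂ) : ∑' n, (muExp n : ℂ) * y ^ n = 1 - y := by
  rw [tsum_eq_sum (mu_vanish y), Finset.sum_pair (by norm_num)]
  simp [muExp]
  ring

lemma geom_summable {x : ℂ} (hx : ‖x‖ < 1) : Summable fun n : ℕ => ‖x ^ n‖ := by
  simpa [norm_pow] using summable_geometric_of_lt_one (norm_nonneg x) hx

lemma full_tsum {K Q : ℕ} (x : Fin K → ℂ) (y : Fin Q → ℂ) (hx : ∀ k, ‖x k‖ < 1) :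
    (Summable fun p : (Fin K → ℕ) × (Fin Q → ℕ) =>
      ‖(∏ k, x k ^ p.1 k) * ∏ m, ((muExp (p.2 m) : ℂ) * y m ^ p.2 m)‖) ∧
    (∑' p : (Fin K → ℕ) × (Fin Q → ℕ),
        (∏ k, x k ^ p.1 k) * ∏ m, ((muExp (p.2 m) : ℂ) * y m ^ p.2 m))
      = (∏ k, (1 - x k)⁻¹) * ∏ m, (1 - y m) := by
  obtain ⟨hs1, ht1⟩ := pi_tsum_prod (fun k n => x k ^ n) (fun k => geom_summable (hx k))
  obtain ⟨hs2, ht2⟩ := pi_tsum_prod (fun m n => (muExp n : ℂ) * y m ^ n) (fun m => mu_summable (y m))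
  constructor
  · have h2 := Summable.mul_of_nonneg hs1 hs2 (fun a => norm_nonneg _) (fun b => norm_nonneg _)
    exact h2.congr fun z => (norm_mul _ _).symm
  · rw [← tsum_mul_tsum_of_summable_norm hs1 hs2, ht1, ht2]
    congr 1
    · exact Finset.prod_congr rfl fun k _ => tsum_geometric_of_norm_lt_one (hx k)
    · exact Finset.prod_congr rfl fun m _ => mu_tsum (y m)

lemma sign_flip {K Q : ℕ} (x : Fin K → ℂ) (y : Fin Q → ℂ) (p : (Fin K → ℕ) × (Fin Q → ℕ)) :
    (∏ k, (-x k) ^ p.1 k) * ∏ m, ((muExp (p.2 m) : ℂ) * (-y m) ^ p.2 m)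
      = (-1 : ℂ) ^ ((∑ k, p.1 k) + (∑ m, p.2 m)) *
        ((∏ k, x k ^ p.1 k) * ∏ m, ((muExp (p.2 m) : ℂ) * y m ^ p.2 m)) := by
  have h1 : (∏ k, (-x k) ^ p.1 k) = (-1 : ℂ) ^ (∑ k, p.1 k) * ∏ k, x k ^ p.1 k := by
    rw [← Finset.prod_pow_eq_pow_sum, ← Finset.prod_mul_distrib]
    exact Finset.prod_congr rfl fun k _ => by rw [← neg_one_mul, mul_pow]
  have h2 : (∏ m, ((muExp (p.2 m) : ℂ) * (-y m) ^ p.2 m))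
      = (-1 : ℂ) ^ (∑ m, p.2 m) * ∏ m, ((muExp (p.2 m) : ℂ) * y m ^ p.2 m) := by
    rw [← Finset.prod_pow_eq_pow_sum, ← Finset.prod_mul_distrib]
    exact Finset.prod_congr rfl fun m _ => by rw [← neg_one_mul, mul_pow]; ring
  rw [h1, h2, pow_add]; ring

lemma core {K Q : ℕ} (x : Fin K → ℂ) (y : Fin Q → ℂ)
    (hx : ∀ k, ‖x k‖ < 1) :
    (∑' p : {p : (Fin K → ℕ) × (Fin Q → ℕ) //
        0 < (∑ k, p.1 k) + (∑ m, p.2 m) ∧ Even ((∑ k, p.1 k) + (∑ m, p.2 m))},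
      (∏ k, x k ^ p.1.1 k) * ∏ m, ((muExp (p.1.2 m) : ℂ) * y m ^ p.1.2 m))
    = ((∏ k, (1 - x k)⁻¹) * (∏ m, (1 - y m))
        + (∏ k, (1 + x k)⁻¹) * (∏ m, (1 + y m))) / 2 - 1 := by
  classical
  set g : (Fin K → ℕ) × (Fin Q → ℕ) → ℂ :=
    fun p => (∏ k, x k ^ p.1 k) * ∏ m, ((muExp (p.2 m) : ℂ) * y m ^ p.2 m) with hg
  set g' : (Fin K → ℕ) × (Fin Q → ℕ) → ℂ :=
    fun p => (∏ k, (-x k) ^ p.1 k) * ∏ m, ((muExp (p.2 m) : ℂ) * (-y m) ^ p.2 m) with hg'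
  have hxn : ∀ k, ‖-x k‖ < 1 := fun k => by rw [norm_neg]; exact hx k
  obtain ⟨hsp, htp⟩ := full_tsum x y hx
  obtain ⟨hsm, htm⟩ := full_tsum (fun k => -x k) (fun m => -y m) hxn
  have hgs : Summable g := hsp.of_norm
  have hgs' : Summable g' := hsm.of_norm
  have hS0 : ∀ p : (Fin K → ℕ) × (Fin Q → ℕ),
      (∑ k, p.1 k) + (∑ m, p.2 m) = 0 → p = 0 := by
    intro p hp
    rw [Nat.add_eq_zero] at hp
    obtain ⟨h1, h2⟩ := hp
    rw [Finset.sum_eq_zero_iff] at h1 h2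
    exact Prod.ext (funext fun k => h1 k (Finset.mem_univ k))
      (funext fun m => h2 m (Finset.mem_univ m))
  have key : ∀ p, ({p : (Fin K → ℕ) × (Fin Q → ℕ) |
        0 < (∑ k, p.1 k) + (∑ m, p.2 m) ∧ Even ((∑ k, p.1 k) + (∑ m, p.2 m))}).indicator g p
      = (g p + g' p) / 2 - (if p = 0 then 1 else 0) := by
    intro p
    have hflip : g' p = (-1 : ℂ) ^ ((∑ k, p.1 k) + (∑ m, p.2 m)) * g p := sign_flip x y p
    by_cases hp : p = 0
    · subst hp
      rw [Set.indicator_of_notMem (by simp)]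
      have hg0 : g 0 = 1 := by simp [hg, muExp]
      have hg0' : g' 0 = 1 := by simp [hg', muExp]
      rw [hg0, hg0']; norm_num
    · have hpos : 0 < (∑ k, p.1 k) + (∑ m, p.2 m) :=
        Nat.pos_of_ne_zero (fun h => hp (hS0 p h))
      rw [if_neg hp, sub_zero]
      by_cases he : Even ((∑ k, p.1 k) + (∑ m, p.2 m))
      · have hmem : p ∈ {p : (Fin K → ℕ) × (Fin Q → ℕ) |
            0 < (∑ k, p.1 k) + (∑ m, p.2 m) ∧ Even ((∑ k, p.1 k) + (∑ m, p.2 m))} := ⟨hpos, he⟩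
        rw [Set.indicator_of_mem hmem g, hflip, he.neg_one_pow]
        ring
      · rw [Set.indicator_of_notMem (fun hmem => he hmem.2), hflip,
          (Nat.not_even_iff_odd.mp he).neg_one_pow]
        ring
  calc (∑' p : {p : (Fin K → ℕ) × (Fin Q → ℕ) //
        0 < (∑ k, p.1 k) + (∑ m, p.2 m) ∧ Even ((∑ k, p.1 k) + (∑ m, p.2 m))}, g p.1)
      = ∑' p, ({p : (Fin K → ℕ) × (Fin Q → ℕ) |
          0 < (∑ k, p.1 k) + (∑ m, p.2 m) ∧ Even ((∑ k, p.1 k) + (∑ m, p.2 m))}).indicator g p :=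
        tsum_subtype _ g
    _ = ∑' p, ((g p + g' p) / 2 - (if p = 0 then 1 else 0)) := tsum_congr key
    _ = (∑' p, (g p + g' p) / 2) - ∑' p : (Fin K → ℕ) × (Fin Q → ℕ), (if p = 0 then 1 else 0) := by
        refine Summable.tsum_sub (((hgs.add hgs').div_const 2)) ?_
        exact summable_of_ne_finset_zero (s := {0}) (fun b hb => by
          simp only [Finset.mem_singleton] at hb; rw [if_neg hb])
    _ = ((∏ k, (1 - x k)⁻¹) * (∏ m, (1 - y m))
        + (∏ k, (1 + x k)⁻¹) * (∏ m, (1 + y m))) / 2 - 1 := by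
        rw [tsum_div_const, Summable.tsum_add hgs hgs', htp, htm, tsum_ite_eq]
        simp [sub_neg_eq_add]

lemma alg_step (A B C D u : ℂ) (hA : A ≠ 0) (hC : C ≠ 0) (h1u : 1 + u ≠ 0) :
    1 + (1 + u)⁻¹ * ((A⁻¹ * B + C⁻¹ * D) / 2 - 1)
      = (1 + u)⁻¹ * (1 / 2 * B / A + 1 / 2 * D / C + u) := by
  field_simp
  ring

set_option maxHeartbeats 1000000 in
lemma factor_eq {K Q : ℕ} (α : Fin K → ℂ) (γ : Fin Q → ℂ)
    (hα : ∀ k, 0 < (α k).re) (hγ : ∀ m, 0 < (γ m).re)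
    (T : ℂ) (hTre : 0 < T.re) (hTim : T.im = 0) (v : ℂ) (h1u : (1 : ℂ) + v ≠ 0) :
    1 + (1 + v)⁻¹ *
      (∑' p : {p : (Fin K → ℕ) × (Fin Q → ℕ) //
          0 < (∑ k, p.1 k) + (∑ m, p.2 m) ∧ Even ((∑ k, p.1 k) + (∑ m, p.2 m))},
        ((∏ m, muExp (p.1.2 m) : ℤ) : ℂ) *
          Complex.exp (-(∑ k, (p.1.1 k : ℂ) * (1 / 2 + α k) +
              ∑ m, (p.1.2 m : ℂ) * (1 / 2 + γ m)) * T))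
    = (1 + v)⁻¹ *
      ((1 / 2) * (∏ m, (1 - Complex.exp (-(1 / 2 + γ m) * T))) /
          (∏ k, (1 - Complex.exp (-(1 / 2 + α k) * T))) +
       (1 / 2) * (∏ m, (1 + Complex.exp (-(1 / 2 + γ m) * T))) /
          (∏ k, (1 + Complex.exp (-(1 / 2 + α k) * T))) +
       v) := by
  set x : Fin K → ℂ := fun k => Complex.exp (-(1 / 2 + α k) * T) with hxdef
  set y : Fin Q → ℂ := fun m => Complex.exp (-(1 / 2 + γ m) * T) with hydef
  have hnorm : ∀ z : ℂ, 0 < z.re → ‖Complex.exp (-(1 / 2 + z) * T)‖ < 1 := by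
    intro z hz
    rw [Complex.norm_exp]
    apply Real.exp_lt_one_iff.mpr
    have : ((-(1 / 2 + z)) * T).re = (-(1 / 2 + z.re)) * T.re := by
      rw [Complex.mul_re, hTim]
      simp
    rw [this]
    apply mul_neg_of_neg_of_pos _ hTre
    linarith
  have hx : ∀ k, ‖x k‖ < 1 := fun k => hnorm _ (hα k)
  have hy : ∀ m, ‖y m‖ < 1 := fun m => hnorm _ (hγ m)
  -- rewrite the summand
  have hterm : ∀ p : (Fin K → ℕ) × (Fin Q → ℕ),
      ((∏ m, muExp (p.2 m) : ℤ) : ℂ) *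
        Complex.exp (-(∑ k, (p.1 k : ℂ) * (1 / 2 + α k) +
            ∑ m, (p.2 m : ℂ) * (1 / 2 + γ m)) * T)
      = (∏ k, x k ^ p.1 k) * ∏ m, ((muExp (p.2 m) : ℂ) * y m ^ p.2 m) := by
    intro p
    have hexp : -(∑ k, (p.1 k : ℂ) * (1 / 2 + α k) +
            ∑ m, (p.2 m : ℂ) * (1 / 2 + γ m)) * T
        = (∑ k, (p.1 k : ℂ) * (-(1 / 2 + α k) * T)) +
          ∑ m, (p.2 m : ℂ) * (-(1 / 2 + γ m) * T) := by
      rw [neg_add, add_mul]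
      congr 1
      · rw [← Finset.sum_neg_distrib, Finset.sum_mul]
        exact Finset.sum_congr rfl fun k _ => by ring
      · rw [← Finset.sum_neg_distrib, Finset.sum_mul]
        exact Finset.sum_congr rfl fun m _ => by ring
    rw [hexp, Complex.exp_add, Complex.exp_sum, Complex.exp_sum]
    have e1 : ∀ k, Complex.exp ((p.1 k : ℂ) * (-(1 / 2 + α k) * T)) = x k ^ p.1 k :=
      fun k => Complex.exp_nat_mul _ (p.1 k)
    have e2 : ∀ m, Complex.exp ((p.2 m : ℂ) * (-(1 / 2 + γ m) * T)) = y m ^ p.2 m :=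
      fun m => Complex.exp_nat_mul _ (p.2 m)
    rw [Finset.prod_congr rfl fun k _ => e1 k, Finset.prod_congr rfl fun m _ => e2 m]
    push_cast
    rw [Finset.prod_mul_distrib]
    ring
  have hsum_eq : (∑' p : {p : (Fin K → ℕ) × (Fin Q → ℕ) //
          0 < (∑ k, p.1 k) + (∑ m, p.2 m) ∧ Even ((∑ k, p.1 k) + (∑ m, p.2 m))},
        ((∏ m, muExp (p.1.2 m) : ℤ) : ℂ) *
          Complex.exp (-(∑ k, (p.1.1 k : ℂ) * (1 / 2 + α k) +
              ∑ m, (p.1.2 m : ℂ) * (1 / 2 + γ m)) * T))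
      = ∑' p : {p : (Fin K → ℕ) × (Fin Q → ℕ) //
          0 < (∑ k, p.1 k) + (∑ m, p.2 m) ∧ Even ((∑ k, p.1 k) + (∑ m, p.2 m))},
        (∏ k, x k ^ p.1.1 k) * ∏ m, ((muExp (p.1.2 m) : ℂ) * y m ^ p.1.2 m) :=
    tsum_congr fun p => hterm p.1
  rw [hsum_eq, core x y hx]
  -- final algebra
  have hA : (∏ k, (1 - x k)) ≠ 0 := Finset.prod_ne_zero_iff.mpr fun k _ => by
    intro h
    have h1 : x k = 1 := by linear_combination -h
    have h2 := hx k
    rw [h1] at h2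
    simp at h2
  have hC : (∏ k, (1 + x k)) ≠ 0 := Finset.prod_ne_zero_iff.mpr fun k _ => by
    intro h
    have h1 : x k = -1 := by linear_combination h
    have h2 := hx k
    rw [h1] at h2
    simp at h2
  rw [Finset.prod_inv_distrib, Finset.prod_inv_distrib]
  exact alg_step _ _ _ _ _ hA hC h1u

/-- closed form for the Euler product `A_𝒟(α;γ)`: for shifts with
positive real parts, the product over monic irreducibles `P` of
`[∏_{j≤k}(1−|P|^{-(1+α_j+α_k)})∏_{m<r}(1−|P|^{-(1+γ_m+γ_r)})/∏_{k,m}(1−|P|^{-(1+α_k+γ_m)})]`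
times `(1 + (1+1/|P|)⁻¹ Σ_{0<Σa+Σc even} (∏μ(P^{c_m}))|P|^{−(Σa_k(1/2+α_k)+Σc_m(1/2+γ_m))})`
equals the same bracket times
`(1+1/|P|)⁻¹((1/2)∏(1−|P|^{-(1/2+γ_m)})/∏(1−|P|^{-(1/2+α_k)})
+ (1/2)∏(1+|P|^{-(1/2+γ_m)})/∏(1+|P|^{-(1/2+α_k)}) + 1/|P|)`;
here `|P|^w = exp(w·deg P·log q)`. -/
theorem stmt_16 {Fq : Type*} [Field Fq] [Fintype Fq] (hq : Odd (Fintype.card Fq))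
    (K Q : ℕ) (hK : 1 ≤ K) (hQ : 1 ≤ Q)
    (α : Fin K → ℂ) (γ : Fin Q → ℂ)
    (hα : ∀ k, 0 < (α k).re) (hγ : ∀ m, 0 < (γ m).re) :
    (∏' P : {P : Polynomial Fq // P.Monic ∧ Irreducible P},
      ((∏ p ∈ Finset.univ.filter (fun p : Fin K × Fin K => p.1 ≤ p.2),
          (1 - Complex.exp (-(1 + α p.1 + α p.2) *
            ((P.1.natDegree : ℂ) * Real.log (Fintype.card Fq))))) *
        (∏ p ∈ Finset.univ.filter (fun p : Fin Q × Fin Q => p.1 < p.2),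
          (1 - Complex.exp (-(1 + γ p.1 + γ p.2) *
            ((P.1.natDegree : ℂ) * Real.log (Fintype.card Fq))))) /
        (∏ k, ∏ m, (1 - Complex.exp (-(1 + α k + γ m) *
            ((P.1.natDegree : ℂ) * Real.log (Fintype.card Fq))))) *
        (1 + (1 + (((Fintype.card Fq : ℝ) ^ P.1.natDegree : ℝ) : ℂ)⁻¹)⁻¹ *
          ∑' p : {p : (Fin K → ℕ) × (Fin Q → ℕ) //
              0 < (∑ k, p.1 k) + (∑ m, p.2 m) ∧ Even ((∑ k, p.1 k) + (∑ m, p.2 m))},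
            ((∏ m, muExp (p.1.2 m) : ℤ) : ℂ) *
              Complex.exp (-(∑ k, (p.1.1 k : ℂ) * (1 / 2 + α k) +
                  ∑ m, (p.1.2 m : ℂ) * (1 / 2 + γ m)) *
                ((P.1.natDegree : ℂ) * Real.log (Fintype.card Fq)))))) =
    ∏' P : {P : Polynomial Fq // P.Monic ∧ Irreducible P},
      ((∏ p ∈ Finset.univ.filter (fun p : Fin K × Fin K => p.1 ≤ p.2),
          (1 - Complex.exp (-(1 + α p.1 + α p.2) *
            ((P.1.natDegree : ℂ) * Real.log (Fintype.card Fq))))) *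
        (∏ p ∈ Finset.univ.filter (fun p : Fin Q × Fin Q => p.1 < p.2),
          (1 - Complex.exp (-(1 + γ p.1 + γ p.2) *
            ((P.1.natDegree : ℂ) * Real.log (Fintype.card Fq))))) /
        (∏ k, ∏ m, (1 - Complex.exp (-(1 + α k + γ m) *
            ((P.1.natDegree : ℂ) * Real.log (Fintype.card Fq))))) *
        ((1 + (((Fintype.card Fq : ℝ) ^ P.1.natDegree : ℝ) : ℂ)⁻¹)⁻¹ *
          ((1 / 2) * (∏ m, (1 - Complex.exp (-(1 / 2 + γ m) *
                ((P.1.natDegree : ℂ) * Real.log (Fintype.card Fq))))) /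
              (∏ k, (1 - Complex.exp (-(1 / 2 + α k) *
                ((P.1.natDegree : ℂ) * Real.log (Fintype.card Fq))))) +
           (1 / 2) * (∏ m, (1 + Complex.exp (-(1 / 2 + γ m) *
                ((P.1.natDegree : ℂ) * Real.log (Fintype.card Fq))))) /
              (∏ k, (1 + Complex.exp (-(1 / 2 + α k) *
                ((P.1.natDegree : ℂ) * Real.log (Fintype.card Fq))))) +
           (((Fintype.card Fq : ℝ) ^ P.1.natDegree : ℝ) : ℂ)⁻¹))) := by
  have hcard : (1 : ℝ) < (Fintype.card Fq : ℝ) := by exact_mod_cast Fintype.one_lt_card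
  refine tprod_congr fun P => ?_
  congr 1
  have hd : 0 < P.1.natDegree := P.2.2.natDegree_pos
  have hTre : 0 < ((P.1.natDegree : ℂ) * ((Real.log (Fintype.card Fq) : ℝ) : ℂ)).re := by
    have : ((P.1.natDegree : ℂ) * ((Real.log (Fintype.card Fq) : ℝ) : ℂ)).re
        = (P.1.natDegree : ℝ) * Real.log (Fintype.card Fq) := by
      simp only [Complex.mul_re, Complex.natCast_re, Complex.ofReal_re,
        Complex.natCast_im, Complex.ofReal_im, mul_zero, zero_mul, sub_zero]
    rw [this]
    exact mul_pos (by exact_mod_cast hd) (Real.log_pos hcard)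
  have hTim : ((P.1.natDegree : ℂ) * ((Real.log (Fintype.card Fq) : ℝ) : ℂ)).im = 0 := by
    simp only [Complex.mul_im, Complex.natCast_re, Complex.ofReal_re,
      Complex.natCast_im, Complex.ofReal_im, mul_zero, zero_mul, add_zero]
  have hr : (0 : ℝ) < (Fintype.card Fq : ℝ) ^ P.1.natDegree := pow_pos (by linarith) _
  have h1v : (1 : ℂ) + ((((Fintype.card Fq : ℝ) ^ P.1.natDegree : ℝ) : ℂ))⁻¹ ≠ 0 := by
    rw [← Complex.ofReal_inv]
    intro h
    have h2 := congrArg Complex.re h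
    simp only [Complex.add_re, Complex.one_re, Complex.ofReal_re, Complex.zero_re] at h2
    have h3 : 0 < ((Fintype.card Fq : ℝ) ^ P.1.natDegree)⁻¹ := inv_pos.mpr hr
    linarith
  exact factor_eq α γ hα hγ _ hTre hTim _ h1v
end
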